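/- arXiv:0710.1845 — 6 statements merged into one kernel-verified Lean document; each statement's English description precedes it below -/
import Mathlib

section
/- If f: [-1,1] → [-1,1] is a piecewise expanding unimodal map (C^1 on [-1,0] and [0,1], with inf Df > 1 on [-1,0] and sup Df < -1 on [0,1], f(-1)=f(1)=-1), then there exists ε > 0 such that for every nondegenerate subinterval L of [-1,1], there exists i ≥ 1 with |f^i(L)| > ε. -/
open Set

set_option maxHeartbeats 1000000

/-- Every piecewise expanding unimodal map is ε-expansive for some ε > 0:
there is ε > 0 so that every nondegenerate subinterval of I = [-1,1] has an iterate of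
length (diameter, witnessed by two points) greater than ε. -/
theorem expansive_of_piecewise_expanding
    (f Df : ℝ → ℝ)
    (hmap : Set.MapsTo f (Set.Icc (-1 : ℝ) 1) (Set.Icc (-1 : ℝ) 1))
    (hcont : ContinuousOn f (Set.Icc (-1 : ℝ) 1))
    (hfm1 : f (-1) = -1) (hf1 : f 1 = -1) (hf0 : f 0 ≤ 1)
    (lam : ℝ) (hlam : 1 < lam)
    (hDfL : ContinuousOn Df (Set.Ico (-1 : ℝ) 0))
    (hDfR : ContinuousOn Df (Set.Ioc (0 : ℝ) 1))
    (hL : ∀ x ∈ Set.Ico (-1 : ℝ) 0,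
      HasDerivWithinAt f (Df x) (Set.Icc (-1 : ℝ) 0) x ∧ lam ≤ Df x)
    (hR : ∀ x ∈ Set.Ioc (0 : ℝ) 1,
      HasDerivWithinAt f (Df x) (Set.Icc (0 : ℝ) 1) x ∧ Df x ≤ -lam) :
    ∃ ε > (0 : ℝ), ∀ a b : ℝ, -1 ≤ a → a < b → b ≤ 1 →
      ∃ i : ℕ, 1 ≤ i ∧ ∃ x ∈ Set.Icc a b, ∃ y ∈ Set.Icc a b,
        ε < |f^[i] x - f^[i] y| := by
  -- continuity on each branch
  have hcontL : ContinuousOn f (Icc (-1:ℝ) 0) :=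
    hcont.mono (Icc_subset_Icc le_rfl (by norm_num))
  have hcontR : ContinuousOn f (Icc (0:ℝ) 1) :=
    hcont.mono (Icc_subset_Icc (by norm_num) le_rfl)
  -- derivatives at interior points
  have hderL : ∀ x ∈ interior (Icc (-1:ℝ) 0), HasDerivAt f (Df x) x := by
    intro x hx
    rw [interior_Icc] at hx
    exact (hL x ⟨hx.1.le, hx.2⟩).1.hasDerivAt (Icc_mem_nhds hx.1 hx.2)
  have hderR : ∀ x ∈ interior (Icc (0:ℝ) 1), HasDerivAt f (Df x) x := by
    intro x hx
    rw [interior_Icc] at hx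
    exact (hR x ⟨hx.1, hx.2.le⟩).1.hasDerivAt (Icc_mem_nhds hx.1 hx.2)
  -- expansion on the left branch
  have L1 : ∀ x y : ℝ, -1 ≤ x → x ≤ y → y ≤ 0 → lam * (y - x) ≤ f y - f x := by
    intro x y hx hxy hy
    have hdiff : DifferentiableOn ℝ f (interior (Icc (-1:ℝ) 0)) :=
      fun z hz => (hderL z hz).differentiableAt.differentiableWithinAt
    have hge : ∀ z ∈ interior (Icc (-1:ℝ) 0), lam ≤ deriv f z := by
      intro z hz
      rw [(hderL z hz).deriv]
      rw [interior_Icc] at hz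
      exact (hL z ⟨hz.1.le, hz.2⟩).2
    exact (convex_Icc _ _).mul_sub_le_image_sub_of_le_deriv hcontL hdiff hge
      x ⟨hx, hxy.trans hy⟩ y ⟨hx.trans hxy, hy⟩ hxy
  -- expansion on the right branch
  have L2 : ∀ x y : ℝ, 0 ≤ x → x ≤ y → y ≤ 1 → lam * (y - x) ≤ f x - f y := by
    intro x y hx hxy hy
    have hdiff : DifferentiableOn ℝ f (interior (Icc (0:ℝ) 1)) :=
      fun z hz => (hderR z hz).differentiableAt.differentiableWithinAt
    have hle : ∀ z ∈ interior (Icc (0:ℝ) 1), deriv f z ≤ -lam := by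
      intro z hz
      rw [(hderR z hz).deriv]
      rw [interior_Icc] at hz
      exact (hR z ⟨hz.1, hz.2.le⟩).2
    have := (convex_Icc _ _).image_sub_le_mul_sub_of_deriv_le hcontR hdiff hle
      x ⟨hx, hxy.trans hy⟩ y ⟨hx.trans hxy, hy⟩ hxy
    linarith
  -- the critical value p = f 0 is positive
  have hppos : 0 < f 0 := by
    have := L1 (-1) 0 le_rfl (by norm_num) le_rfl
    rw [hfm1] at this
    nlinarith
  -- f x ≤ f 0 on [-1,1]
  have hple : ∀ x ∈ Icc (-1:ℝ) 1, f x ≤ f 0 := by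
    intro x hx
    rcases le_total x 0 with h | h
    · have := L1 x 0 hx.1 h le_rfl; nlinarith
    · have := L2 0 x le_rfl h hx.2; nlinarith
  -- choose N with 4 < lam ^ N
  obtain ⟨N, hN⟩ : ∃ N : ℕ, (4:ℝ) < lam ^ N := pow_unbounded_of_one_lt 4 hlam
  have hN1 : 1 ≤ N := by
    rcases Nat.eq_zero_or_pos N with h | h
    · rw [h, pow_zero] at hN; norm_num at hN
    · exact h
  have hNne : (Finset.range N).Nonempty := Finset.nonempty_range_iff.mpr (by omega)
  -- the quantity ε
  set g : ℕ → ℝ := fun k => if f^[k] (f 0) = 0 then 1 else |f^[k] (f 0)| with hg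
  have hgpos : ∀ k, 0 < g k := by
    intro k
    simp only [hg]
    split_ifs with h
    · norm_num
    · exact abs_pos.mpr h
  have hinfpos : 0 < (Finset.range N).inf' hNne g := by
    rw [Finset.lt_inf'_iff]
    exact fun i _ => hgpos i
  set ε : ℝ := ((Finset.range N).inf' hNne g) / 2 with hε
  have hεpos : 0 < ε := by positivity
  have hεk : ∀ k, k < N → f^[k] (f 0) ≠ 0 → ε < |f^[k] (f 0)| := by
    intro k hk hne
    have h1 : (Finset.range N).inf' hNne g ≤ g k :=
      Finset.inf'_le g (Finset.mem_range.2 hk)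
    have h2 : g k = |f^[k] (f 0)| := if_neg hne
    rw [hε]
    rw [h2] at h1
    linarith
  refine ⟨ε, hεpos, ?_⟩
  intro a b ha hab hb
  by_contra hcon
  push_neg at hcon
  -- hcon : ∀ i, 1 ≤ i → ∀ x ∈ Icc a b, ∀ y ∈ Icc a b, |f^[i] x - f^[i] y| ≤ ε
  have habs : Icc a b ⊆ Icc (-1:ℝ) 1 := Icc_subset_Icc ha hb
  set S : ℕ → Set ℝ := fun n => f^[n] '' Icc a b with hS
  have hS0 : S 0 = Icc a b := by simp [hS]
  have hSsub : ∀ n, S n ⊆ Icc (-1:ℝ) 1 := by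
    intro n
    induction n with
    | zero => rw [hS0]; exact habs
    | succ n ih =>
      rintro y ⟨x, hx, rfl⟩
      rw [Function.iterate_succ_apply']
      exact hmap (ih ⟨x, hx, rfl⟩)
  have hScont : ∀ n, ContinuousOn (f^[n]) (Icc a b) := by
    intro n
    induction n with
    | zero => simpa using continuousOn_id
    | succ n ih =>
      rw [Function.iterate_succ']
      exact hcont.comp ih fun x hx => hSsub n ⟨x, hx, rfl⟩
  have hScomp : ∀ n, IsCompact (S n) := fun n =>
    isCompact_Icc.image_of_continuousOn (hScont n)
  have hSne : ∀ n, (S n).Nonempty := fun n => ⟨_, a, left_mem_Icc.2 hab.le, rfl⟩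
  have hSconn : ∀ n, IsPreconnected (S n) := fun n =>
    isPreconnected_Icc.image _ (hScont n)
  have hsucc : ∀ n, S (n+1) = f '' S n := by
    intro n
    show f^[n+1] '' Icc a b = f '' (f^[n] '' Icc a b)
    rw [Function.iterate_succ', Set.image_comp]
  set m : ℕ → ℝ := fun n => sInf (S n) with hm
  set M : ℕ → ℝ := fun n => sSup (S n) with hM
  have hmS : ∀ n, m n ∈ S n := fun n => (hScomp n).sInf_mem (hSne n)
  have hMS : ∀ n, M n ∈ S n := fun n => (hScomp n).sSup_mem (hSne n)
  have hmem : ∀ n x, x ∈ S n → m n ≤ x ∧ x ≤ M n := fun n x hx =>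
    ⟨csInf_le (hScomp n).bddBelow hx, le_csSup (hScomp n).bddAbove hx⟩
  have hIcc : ∀ n, Icc (m n) (M n) ⊆ S n := fun n =>
    (hSconn n).Icc_subset (hmS n) (hMS n)
  have hmle : ∀ n, m n ≤ M n := fun n => ((hmem n _ (hmS n)).2)
  have hbd : ∀ n, -1 ≤ m n ∧ M n ≤ 1 := fun n =>
    ⟨(hSsub n (hmS n)).1, (hSsub n (hMS n)).2⟩
  have hm0 : m 0 = a := by show sInf (S 0) = a; rw [hS0]; exact csInf_Icc hab.le
  have hM0 : M 0 = b := by show sSup (S 0) = b; rw [hS0]; exact csSup_Icc hab.le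
  -- smallness of all iterated images
  have hsmall : ∀ n, 1 ≤ n → M n - m n ≤ ε := by
    intro n hn
    obtain ⟨x, hx, hxe⟩ := hmS n
    obtain ⟨y, hy, hye⟩ := hMS n
    have := hcon n hn y hy x hx
    have h1 : M n - m n = f^[n] y - f^[n] x := by rw [hxe, hye]
    rw [h1]
    exact (le_abs_self _).trans this
  -- splitting predicate
  set sp : ℕ → Prop := fun t => m t < 0 ∧ 0 < M t with hsp
  have hnsp' : ∀ t, ¬ sp t → 0 ≤ m t ∨ M t ≤ 0 := by
    intro t ht
    by_contra hc
    push_neg at hc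
    exact ht ⟨hc.1, hc.2⟩
  -- no-split step: monotone branch
  have stepA : ∀ n, M n ≤ 0 → m (n+1) = f (m n) ∧ M (n+1) = f (M n) := by
    intro n hMn
    have hmono : ∀ x ∈ S n, ∀ y ∈ S n, x ≤ y → f x ≤ f y := by
      intro x hx y hy hxy
      have h1 := L1 x y (hSsub n hx).1 hxy ((hmem n y hy).2.trans hMn)
      nlinarith
    constructor
    · show sInf (S (n+1)) = _
      rw [hsucc n]
      refine le_antisymm (csInf_le ((hScomp n).image_of_continuousOn
        (hcontL.mono ?_)).bddBelow ⟨m n, hmS n, rfl⟩) (le_csInf ((hSne n).image f) ?_)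
      · intro x hx
        exact ⟨(hSsub n hx).1, (hmem n x hx).2.trans hMn⟩
      · rintro y ⟨x, hx, rfl⟩
        exact hmono _ (hmS n) _ hx (hmem n x hx).1
    · show sSup (S (n+1)) = _
      rw [hsucc n]
      refine le_antisymm (csSup_le ((hSne n).image f) ?_) (le_csSup ((hScomp n).image_of_continuousOn
        (hcontL.mono ?_)).bddAbove ⟨M n, hMS n, rfl⟩)
      · rintro y ⟨x, hx, rfl⟩
        exact hmono _ hx _ (hMS n) (hmem n x hx).2
      · intro x hx
        exact ⟨(hSsub n hx).1, (hmem n x hx).2.trans hMn⟩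
  have stepB : ∀ n, 0 ≤ m n → m (n+1) = f (M n) ∧ M (n+1) = f (m n) := by
    intro n hmn
    have hanti : ∀ x ∈ S n, ∀ y ∈ S n, x ≤ y → f y ≤ f x := by
      intro x hx y hy hxy
      have h1 := L2 x y (hmn.trans (hmem n x hx).1) hxy (hSsub n hy).2
      nlinarith
    constructor
    · show sInf (S (n+1)) = _
      rw [hsucc n]
      refine le_antisymm (csInf_le ?_ ⟨M n, hMS n, rfl⟩) (le_csInf ((hSne n).image f) ?_)
      · exact ((hScomp n).image_of_continuousOn (hcontR.mono fun x hx =>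
          ⟨hmn.trans (hmem n x hx).1, (hSsub n hx).2⟩)).bddBelow
      · rintro y ⟨x, hx, rfl⟩
        exact hanti _ hx _ (hMS n) (hmem n x hx).2
    · show sSup (S (n+1)) = _
      rw [hsucc n]
      refine le_antisymm (csSup_le ((hSne n).image f) ?_) (le_csSup ?_ ⟨m n, hmS n, rfl⟩)
      · rintro y ⟨x, hx, rfl⟩
        exact hanti _ (hmS n) _ hx (hmem n x hx).1
      · exact ((hScomp n).image_of_continuousOn (hcontR.mono fun x hx =>
          ⟨hmn.trans (hmem n x hx).1, (hSsub n hx).2⟩)).bddAbove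
  -- expansion when there is no split
  have step_nosplit : ∀ n, ¬ sp n → lam * (M n - m n) ≤ M (n+1) - m (n+1) := by
    intro n hns
    rcases hnsp' n hns with h | hMn
    swap
    · obtain ⟨e1, e2⟩ := stepA n hMn
      rw [e1, e2]
      exact L1 (m n) (M n) (hbd n).1 (hmle n) hMn
    · obtain ⟨e1, e2⟩ := stepB n h
      rw [e1, e2]
      exact L2 (m n) (M n) h (hmle n) (hbd n).2
  -- split step
  have step_split : ∀ n, sp n →
      lam / 2 * (M n - m n) ≤ M (n+1) - m (n+1) ∧ M (n+1) = f 0 := by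
    intro n hn
    obtain ⟨h1, h2⟩ := hn
    have h0 : (0:ℝ) ∈ S n := hIcc n ⟨h1.le, h2.le⟩
    have hp1 : f 0 ∈ S (n+1) := by rw [hsucc n]; exact ⟨0, h0, rfl⟩
    have hMeq : M (n+1) = f 0 := by
      show sSup (S (n+1)) = _
      rw [hsucc n]
      refine le_antisymm (csSup_le ((hSne n).image f) ?_)
        (le_csSup ((hScomp (n+1)).bddAbove.mono (le_of_eq (hsucc n).symm)) ⟨0, h0, rfl⟩)
      · rintro y ⟨x, hx, rfl⟩
        exact hple x (hSsub n hx)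
    have hfm : f (m n) ∈ S (n+1) := by rw [hsucc n]; exact ⟨m n, hmS n, rfl⟩
    have hfM : f (M n) ∈ S (n+1) := by rw [hsucc n]; exact ⟨M n, hMS n, rfl⟩
    have e1 : lam * (0 - m n) ≤ f 0 - f (m n) := L1 (m n) 0 (hbd n).1 h1.le le_rfl
    have e2 : lam * (M n - 0) ≤ f 0 - f (M n) := by
      have := L2 0 (M n) le_rfl h2.le (hbd n).2
      linarith
    have k1 := hmem (n+1) _ hfm
    have k2 := hmem (n+1) _ hfM
    have k3 := hmem (n+1) _ hp1
    constructor
    · rcases le_total (-(m n)) (M n) with h | h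
      · nlinarith
      · nlinarith
    · exact hMeq
  -- positivity of lengths
  have step_any : ∀ n, lam / 2 * (M n - m n) ≤ M (n+1) - m (n+1) := by
    intro n
    by_cases h : sp n
    · exact (step_split n h).1
    · have := step_nosplit n h
      have := hmle n
      nlinarith
  have hlpos : ∀ n, 0 < M n - m n := by
    intro n
    induction n with
    | zero => rw [hm0, hM0]; linarith
    | succ n ih =>
      have := step_any n
      nlinarith
  -- endpoint propagation through non-split steps
  have prop : ∀ t, ¬ sp t → ∀ q, (q = m t ∨ q = M t) →
      (f q = m (t+1) ∨ f q = M (t+1)) := by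
    intro t hns q hq
    rcases hnsp' t hns with h | hMt
    swap
    · obtain ⟨e1, e2⟩ := stepA t hMt
      rcases hq with rfl | rfl
      · exact Or.inl e1.symm
      · exact Or.inr e2.symm
    · obtain ⟨e1, e2⟩ := stepB t h
      rcases hq with rfl | rfl
      · exact Or.inr e2.symm
      · exact Or.inl e1.symm
  -- no two splits at distance < N
  have gap' : ∀ s u, sp s → sp u → s < u → u - s < N →
      (∀ t, s < t → t < u → ¬ sp t) → False := by
    intro s u hss hsu hlt hdist hbet
    have claim : ∀ i, i < u - s →
        (f^[i] (f 0) = m (s+i+1) ∨ f^[i] (f 0) = M (s+i+1)) := by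
      intro i
      induction i with
      | zero =>
        intro _
        exact Or.inr (by simpa using (step_split s hss).2.symm)
      | succ i ih =>
        intro hi
        have hq := ih (by omega)
        have hnsp : ¬ sp (s+i+1) := hbet _ (by omega) (by omega)
        have h2 := prop (s+i+1) hnsp _ hq
        rw [← Function.iterate_succ_apply' f i (f 0)] at h2
        have e : s + i + 1 + 1 = s + (i+1) + 1 := by omega
        rw [e] at h2
        exact h2
    have hq := claim (u - s - 1) (by omega)
    have e : s + (u - s - 1) + 1 = u := by omega
    rw [e] at hq
    have hu1 : 1 ≤ u := by omega
    have hsm := hsmall u hu1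
    obtain ⟨h1, h2⟩ := hsu
    have hqne : f^[u-s-1] (f 0) ≠ 0 := by
      rcases hq with h | h
      · rw [h]; exact ne_of_lt h1
      · rw [h]; exact ne_of_gt h2
    have hqabs : |f^[u-s-1] (f 0)| ≤ M u - m u := by
      rcases hq with h | h
      · rw [h, abs_of_neg h1]; linarith
      · rw [h, abs_of_pos h2]; linarith
    have := hεk (u - s - 1) (by omega) hqne
    linarith
  -- the window lemma
  have W : ∀ k, k ≤ N → ∀ n,
      (lam ^ k * (M n - m n) ≤ M (n+k) - m (n+k) ∧
        ∀ t, n ≤ t → t < n + k → ¬ sp t) ∨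
      (lam ^ k / 2 * (M n - m n) ≤ M (n+k) - m (n+k) ∧
        ∃ s, n ≤ s ∧ s < n + k ∧ sp s ∧ ∀ t, s < t → t < n + k → ¬ sp t) := by
    intro k
    induction k with
    | zero =>
      intro _ n
      left
      constructor
      · simp
      · intro t h1 h2; omega
    | succ k ih =>
      intro hk n
      have hk' : k ≤ N := by omega
      have hlampos : (0:ℝ) < lam := by linarith
      have hpowpos : (0:ℝ) < lam ^ k := pow_pos hlampos k
      have hln : 0 < M n - m n := hlpos n
      have hlnk : 0 < M (n+k) - m (n+k) := hlpos (n+k)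
      have e : n + (k+1) = (n+k) + 1 := by omega
      rcases ih hk' n with ⟨h1, h2⟩ | ⟨h1, s, hs1, hs2, hs3, hs4⟩
      · by_cases hspk : sp (n+k)
        · right
          refine ⟨?_, n+k, by omega, by omega, hspk, by omega⟩
          have h3 := (step_split (n+k) hspk).1
          rw [e, pow_succ]
          nlinarith
        · left
          constructor
          · have h3 := step_nosplit (n+k) hspk
            rw [e, pow_succ]
            nlinarith
          · intro t ht1 ht2
            rcases Nat.lt_or_ge t (n+k) with h | h
            · exact h2 t ht1 h
            · have : t = n + k := by omega
              rw [this]; exact hspk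
      · by_cases hspk : sp (n+k)
        · exact (gap' s (n+k) hs3 hspk (by omega) (by omega) hs4).elim
        · right
          refine ⟨?_, s, hs1, by omega, hs3, ?_⟩
          · have h3 := step_nosplit (n+k) hspk
            rw [e, pow_succ]
            nlinarith
          · intro t ht1 ht2
            rcases Nat.lt_or_ge t (n+k) with h | h
            · exact hs4 t ht1 h
            · have : t = n + k := by omega
              rw [this]; exact hspk
  -- doubling over each window of length N
  have hwin : ∀ n, 2 * (M n - m n) ≤ M (n+N) - m (n+N) := by
    intro n
    have hln : 0 < M n - m n := hlpos n
    rcases W N le_rfl n with ⟨h1, _⟩ | ⟨h1, _⟩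
    · nlinarith
    · nlinarith
  -- geometric growth
  have growth : ∀ k : ℕ, 2 ^ k * (b - a) ≤ M (k*N) - m (k*N) := by
    intro k
    induction k with
    | zero => simp [hm0, hM0]
    | succ k ih =>
      have e : (k+1) * N = k * N + N := by ring
      rw [e, pow_succ]
      have := hwin (k*N)
      nlinarith
  -- final contradiction
  obtain ⟨k, hk⟩ : ∃ k : ℕ, 2 / (b - a) < 2 ^ k :=
    pow_unbounded_of_one_lt (2 / (b-a)) one_lt_two
  have hba : 0 < b - a := by linarith
  have h1 : 2 < 2 ^ k * (b - a) := by
    rw [div_lt_iff₀ hba] at hk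
    linarith
  have h2 := growth k
  have h3 := hbd (k*N)
  linarith
end

section
/- Let f be a piecewise expanding unimodal map with critical point c = 0, and let v ∈ L^∞(I). Let D be the set of x ∈ I whose forward orbit under f does not contain c. Then the function α: D → ℝ defined by α(x) = -Σ_{i=0}^∞ v(f^i(x))/Df^{i+1}(x) is well-defined, bounded (by |v|_∞/(λ_f - 1)), and satisfies the twisted cohomological equation v(x) = α(f(x)) - Df(x)·α(x) for every x ∈ D. -/
/-- For a piecewise expanding unimodal map `f` and bounded `v`, on the set
`D` of points of `I` whose forward orbit avoids the critical point `c = 0`, the function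
`α(x) = -∑_{i≥0} v(f^i(x))/Df^{i+1}(x)` is well defined (the series converges), bounded
by `|v|_∞/(lam-1)`, and solves the twisted cohomological equation
`v(x) = α(f(x)) - Df(x)·α(x)`.  Here `Df^{i+1}(x) = ∏_{j=0}^{i} Df(f^j(x))`. -/
theorem twisted_cohomological_solution
    (f Df : ℝ → ℝ) (lam : ℝ) (hlam : 1 < lam)
    (hmap : Set.MapsTo f (Set.Icc (-1 : ℝ) 1) (Set.Icc (-1 : ℝ) 1))
    (hDf : ∀ x ∈ Set.Icc (-1 : ℝ) 1, x ≠ 0 → lam ≤ |Df x|)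
    (v : ℝ → ℝ) (M : ℝ) (hv : ∀ x ∈ Set.Icc (-1 : ℝ) 1, |v x| ≤ M) :
    ∀ x ∈ Set.Icc (-1 : ℝ) 1, (∀ i : ℕ, f^[i] x ≠ 0) →
      Summable (fun i : ℕ => v (f^[i] x) / ∏ j ∈ Finset.range (i + 1), Df (f^[j] x)) ∧
      |(-∑' i : ℕ, v (f^[i] x) / ∏ j ∈ Finset.range (i + 1), Df (f^[j] x))|
        ≤ M / (lam - 1) ∧
      v x = (-∑' i : ℕ, v (f^[i] (f x)) / ∏ j ∈ Finset.range (i + 1), Df (f^[j] (f x)))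
              - Df x * (-∑' i : ℕ, v (f^[i] x) / ∏ j ∈ Finset.range (i + 1), Df (f^[j] x)) := by
  have hlam0 : (0:ℝ) < lam := lt_trans one_pos hlam
  have hlamne : lam ≠ 0 := ne_of_gt hlam0
  have hlam1 : lam - 1 ≠ 0 := sub_ne_zero.mpr (ne_of_gt hlam)
  have hrpos : (0:ℝ) < lam⁻¹ := inv_pos.mpr hlam0
  have hr : |lam⁻¹| < 1 := by
    rw [abs_of_pos hrpos]; exact inv_lt_one_of_one_lt₀ hlam
  have hM0 : 0 ≤ M := le_trans (abs_nonneg _) (hv 0 (by constructor <;> norm_num))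
  have horb : ∀ (y : ℝ), y ∈ Set.Icc (-1:ℝ) 1 → ∀ n : ℕ, f^[n] y ∈ Set.Icc (-1:ℝ) 1 := by
    intro y hy n
    exact (hmap.iterate n) hy
  have hprod : ∀ (y : ℝ), y ∈ Set.Icc (-1:ℝ) 1 → (∀ i : ℕ, f^[i] y ≠ 0) →
      ∀ i : ℕ, lam ^ (i+1) ≤ |∏ j ∈ Finset.range (i + 1), Df (f^[j] y)| := by
    intro y hy hy0 i
    rw [Finset.abs_prod]
    calc lam ^ (i+1) = ∏ _j ∈ Finset.range (i+1), lam := by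
          rw [Finset.prod_const, Finset.card_range]
      _ ≤ ∏ j ∈ Finset.range (i+1), |Df (f^[j] y)| :=
          Finset.prod_le_prod (fun _ _ => le_of_lt hlam0)
            (fun j _ => hDf _ (horb y hy j) (hy0 j))
  have hprodne : ∀ (y : ℝ), y ∈ Set.Icc (-1:ℝ) 1 → (∀ i : ℕ, f^[i] y ≠ 0) →
      ∀ i : ℕ, (∏ j ∈ Finset.range (i + 1), Df (f^[j] y)) ≠ 0 := by
    intro y hy hy0 i
    have := lt_of_lt_of_le (pow_pos hlam0 (i+1)) (hprod y hy hy0 i)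
    exact fun h => by simp [h] at this
  -- term bound
  have hterm : ∀ (y : ℝ), y ∈ Set.Icc (-1:ℝ) 1 → (∀ i : ℕ, f^[i] y ≠ 0) →
      ∀ i : ℕ, |v (f^[i] y) / ∏ j ∈ Finset.range (i + 1), Df (f^[j] y)|
        ≤ M * lam⁻¹ ^ (i+1) := by
    intro y hy hy0 i
    rw [abs_div]
    have h1 : |v (f^[i] y)| ≤ M := hv _ (horb y hy i)
    have h2 := hprod y hy hy0 i
    have heq : M * lam⁻¹ ^ (i+1) = M / lam ^ (i+1) := by
      rw [inv_pow]; ring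
    rw [heq]
    exact div_le_div₀ hM0 h1 (pow_pos hlam0 (i+1)) h2
  -- geometric majorant
  have hgeo : Summable (fun i : ℕ => M * lam⁻¹ ^ (i+1)) := by
    have : Summable (fun i : ℕ => lam⁻¹ ^ i) := summable_geometric_of_abs_lt_one hr
    exact ((this.mul_left lam⁻¹).mul_left M).congr (fun i => by ring)
  have hgeosum : (∑' i : ℕ, M * lam⁻¹ ^ (i+1)) = M / (lam - 1) := by
    have h1 : (∑' i : ℕ, lam⁻¹ ^ i) = (1 - lam⁻¹)⁻¹ := tsum_geometric_of_abs_lt_one hr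
    have h2 : (∑' i : ℕ, M * lam⁻¹ ^ (i+1)) = M * lam⁻¹ * ∑' i : ℕ, lam⁻¹ ^ i := by
      rw [← tsum_mul_left]
      exact tsum_congr (fun i => by ring)
    rw [h2, h1]
    field_simp
  -- summability for any good point
  have hsumm : ∀ (y : ℝ), y ∈ Set.Icc (-1:ℝ) 1 → (∀ i : ℕ, f^[i] y ≠ 0) →
      Summable (fun i : ℕ => v (f^[i] y) / ∏ j ∈ Finset.range (i + 1), Df (f^[j] y)) := by
    intro y hy hy0
    apply Summable.of_abs
    exact Summable.of_nonneg_of_le (fun i => abs_nonneg _) (hterm y hy hy0) hgeo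
  intro x hx hx0
  have hfx : f x ∈ Set.Icc (-1:ℝ) 1 := hmap hx
  have hfx0 : ∀ i : ℕ, f^[i] (f x) ≠ 0 := by
    intro i
    rw [← Function.iterate_succ_apply]
    exact hx0 (i+1)
  have hSx := hsumm x hx hx0
  have hSfx := hsumm (f x) hfx hfx0
  refine ⟨hSx, ?_, ?_⟩
  · rw [abs_neg]
    have habs : Summable (fun i : ℕ => ‖v (f^[i] x) / ∏ j ∈ Finset.range (i + 1), Df (f^[j] x)‖) := by
      simp only [Real.norm_eq_abs]; exact hSx.abs
    have h1 := norm_tsum_le_tsum_norm habs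
    simp only [Real.norm_eq_abs] at h1
    refine le_trans h1 (le_trans (Summable.tsum_le_tsum (hterm x hx hx0) hSx.abs hgeo) ?_)
    rw [hgeosum]
  · -- cohomological equation
    have hDfx : Df x ≠ 0 := by
      have := hDf x hx (hx0 0)
      intro h; rw [h] at this; simp at this
      linarith
    have hshift : ∀ i : ℕ,
        v (f^[i+1] x) / ∏ j ∈ Finset.range (i + 2), Df (f^[j] x)
        = (v (f^[i] (f x)) / ∏ j ∈ Finset.range (i + 1), Df (f^[j] (f x))) / Df x := by
      intro i
      have h1 : ∏ j ∈ Finset.range (i + 2), Df (f^[j] x)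
          = (∏ j ∈ Finset.range (i + 1), Df (f^[j+1] x)) * Df (f^[0] x) :=
        Finset.prod_range_succ' (fun j => Df (f^[j] x)) (i+1)
      have h2 : ∀ j : ℕ, f^[j+1] x = f^[j] (f x) := fun j => Function.iterate_succ_apply f j x
      rw [h1]
      simp only [h2, Function.iterate_zero_apply]
      rw [div_div]
    have hS : (∑' i : ℕ, v (f^[i] x) / ∏ j ∈ Finset.range (i + 1), Df (f^[j] x))
        = v x / Df x + (∑' i : ℕ, v (f^[i] (f x)) / ∏ j ∈ Finset.range (i + 1), Df (f^[j] (f x))) / Df x := by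
      rw [Summable.tsum_eq_zero_add hSx]
      congr 1
      · simp
      · rw [← tsum_div_const]
        exact tsum_congr (fun i => hshift i)
    rw [hS]
    field_simp
    ring
end

section
/- Let f₀ be a piecewise expanding C^1 unimodal map whose critical point is not periodic. Then for every η > 0 there exists a neighborhood W of f₀ in the C^1 topology (within piecewise expanding unimodal maps) such that |J(f,v) - J(f₀,v)| ≤ η·|v|₁ for every piecewise C^1 function v and every f ∈ W. -/
/-- `f` is a piecewise expanding C¹ unimodal map on `I = [-1,1]` with critical point
`c = 0`, expansion constant `lam`, and piecewise derivative `Df`. -/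
def PEUnimodal (f Df : ℝ → ℝ) (lam : ℝ) : Prop :=
  1 < lam ∧
  Set.MapsTo f (Set.Icc (-1 : ℝ) 1) (Set.Icc (-1 : ℝ) 1) ∧
  f (-1) = -1 ∧ f 1 = -1 ∧ f 0 ≤ 1 ∧
  ContinuousOn f (Set.Icc (-1 : ℝ) 1) ∧
  ContinuousOn Df (Set.Ico (-1 : ℝ) 0) ∧ ContinuousOn Df (Set.Ioc (0 : ℝ) 1) ∧
  (∀ x ∈ Set.Ico (-1 : ℝ) 0,
    HasDerivWithinAt f (Df x) (Set.Icc (-1 : ℝ) 0) x ∧ lam ≤ Df x) ∧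
  (∀ x ∈ Set.Ioc (0 : ℝ) 1,
    HasDerivWithinAt f (Df x) (Set.Icc (0 : ℝ) 1) x ∧ Df x ≤ -lam)

/-- The linear functional `J(f,·)`: if the critical point `0` is periodic with prime
period `p`, `J(f,v) = ∑_{i<p} v(f^i(0))/Df^i(f(0))`, otherwise
`J(f,v) = ∑_{i≥0} v(f^i(0))/Df^i(f(0))`, where `Df^i(f(0)) = ∏_{j=1}^{i} Df(f^j(0))`. -/
noncomputable def Jfun (f Df v : ℝ → ℝ) : ℝ := by
  classical
  exact if h : ∃ p : ℕ, 0 < p ∧ f^[p] 0 = 0 then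
    ∑ i ∈ Finset.range (Nat.find h),
      v (f^[i] 0) / ∏ j ∈ Finset.Icc 1 i, Df (f^[j] 0)
  else
    ∑' i : ℕ, v (f^[i] 0) / ∏ j ∈ Finset.Icc 1 i, Df (f^[j] 0)

/-! ### Auxiliary lemmas -/

lemma orbit_mem_Icc {f : ℝ → ℝ}
    (hm : Set.MapsTo f (Set.Icc (-1 : ℝ) 1) (Set.Icc (-1 : ℝ) 1)) :
    ∀ i : ℕ, f^[i] 0 ∈ Set.Icc (-1 : ℝ) 1 := by
  intro i
  induction i with
  | zero => simp
  | succ n ih => rw [Function.iterate_succ_apply']; exact hm ih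

lemma abs_prod_lower {s : Finset ℕ} {g : ℕ → ℝ} {c : ℝ} (hc : 0 ≤ c)
    (h : ∀ j ∈ s, c ≤ |g j|) : c ^ s.card ≤ |∏ j ∈ s, g j| := by
  rw [Finset.abs_prod]
  calc c ^ s.card = ∏ _j ∈ s, c := by rw [Finset.prod_const]
  _ ≤ ∏ j ∈ s, |g j| := Finset.prod_le_prod (fun _ _ => hc) h

lemma abs_prod_diff {s : Finset ℕ} {a b : ℕ → ℝ} {M ε : ℝ} (hM : 1 ≤ M) (hε : 0 ≤ ε)
    (ha : ∀ j ∈ s, |a j| ≤ M) (hb : ∀ j ∈ s, |b j| ≤ M)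
    (hab : ∀ j ∈ s, |a j - b j| ≤ ε) :
    |∏ j ∈ s, a j - ∏ j ∈ s, b j| ≤ s.card * M ^ s.card * ε := by
  classical
  induction s using Finset.induction_on with
  | empty => simp [hε]
  | @insert k s hk ih =>
    have hM0 : 0 ≤ M := le_trans zero_le_one hM
    have haM : |∏ j ∈ s, a j| ≤ M ^ s.card := by
      rw [Finset.abs_prod]
      calc ∏ j ∈ s, |a j| ≤ ∏ _j ∈ s, M :=
            Finset.prod_le_prod (fun j _ => abs_nonneg _)
              (fun j hj => ha j (Finset.mem_insert_of_mem hj))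
      _ = M ^ s.card := Finset.prod_const M
    have ihs := ih (fun j hj => ha j (Finset.mem_insert_of_mem hj))
      (fun j hj => hb j (Finset.mem_insert_of_mem hj))
      (fun j hj => hab j (Finset.mem_insert_of_mem hj))
    rw [Finset.prod_insert hk, Finset.prod_insert hk, Finset.card_insert_of_notMem hk]
    have hdec : a k * ∏ j ∈ s, a j - b k * ∏ j ∈ s, b j
        = (a k - b k) * ∏ j ∈ s, a j + b k * (∏ j ∈ s, a j - ∏ j ∈ s, b j) := by ring
    rw [hdec]
    calc |(a k - b k) * ∏ j ∈ s, a j + b k * (∏ j ∈ s, a j - ∏ j ∈ s, b j)|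
        ≤ |(a k - b k) * ∏ j ∈ s, a j| + |b k * (∏ j ∈ s, a j - ∏ j ∈ s, b j)| :=
          abs_add_le _ _
      _ = |a k - b k| * |∏ j ∈ s, a j| + |b k| * |∏ j ∈ s, a j - ∏ j ∈ s, b j| := by
          rw [abs_mul, abs_mul]
      _ ≤ ε * M ^ s.card + M * (s.card * M ^ s.card * ε) := by
          have h1 : |a k - b k| * |∏ j ∈ s, a j| ≤ ε * M ^ s.card :=
            mul_le_mul (hab k (Finset.mem_insert_self k s)) haM (abs_nonneg _) hε
          have h2 : |b k| * |∏ j ∈ s, a j - ∏ j ∈ s, b j|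
              ≤ M * (s.card * M ^ s.card * ε) :=
            mul_le_mul (hb k (Finset.mem_insert_self k s)) ihs (abs_nonneg _) hM0
          linarith
      _ ≤ ((s.card : ℝ) + 1) * M ^ (s.card + 1) * ε := by
          rw [pow_succ]
          have hcn : (0:ℝ) ≤ (s.card : ℝ) := Nat.cast_nonneg _
          have hMp : (0:ℝ) ≤ ε * M ^ s.card := mul_nonneg hε (pow_nonneg hM0 s.card)
          nlinarith [mul_le_mul_of_nonneg_left hM hMp, pow_nonneg hM0 s.card]
      _ = ((s.card + 1 : ℕ) : ℝ) * M ^ (s.card + 1) * ε := by push_cast; ring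

lemma orbit_close {f₀ : ℝ → ℝ} (hc : ContinuousOn f₀ (Set.Icc (-1 : ℝ) 1))
    (hm₀ : Set.MapsTo f₀ (Set.Icc (-1 : ℝ) 1) (Set.Icc (-1 : ℝ) 1)) :
    ∀ (i : ℕ) (ε : ℝ), 0 < ε → ∃ r > (0:ℝ), ∀ f : ℝ → ℝ,
      Set.MapsTo f (Set.Icc (-1 : ℝ) 1) (Set.Icc (-1 : ℝ) 1) →
      (∀ x ∈ Set.Icc (-1 : ℝ) 1, |f x - f₀ x| ≤ r) →
      |f^[i] 0 - f₀^[i] 0| ≤ ε := by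
  intro i
  induction i with
  | zero => intro ε hε; exact ⟨1, one_pos, fun f _ _ => by simpa using le_of_lt hε⟩
  | succ n ih =>
    intro ε hε
    set y := f₀^[n] 0 with hy
    have hyI : y ∈ Set.Icc (-1 : ℝ) 1 := orbit_mem_Icc hm₀ n
    have hcy : ContinuousWithinAt f₀ (Set.Icc (-1 : ℝ) 1) y := hc y hyI
    rw [Metric.continuousWithinAt_iff] at hcy
    obtain ⟨δ, hδ, hδ'⟩ := hcy (ε/2) (by linarith)
    obtain ⟨r₁, hr₁, hr₁'⟩ := ih (min (δ/2) 1) (by positivity)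
    refine ⟨min r₁ (ε/2), by positivity, fun f hmf hcf => ?_⟩
    have hxI : f^[n] 0 ∈ Set.Icc (-1 : ℝ) 1 := orbit_mem_Icc hmf n
    have h1 : |f^[n] 0 - y| ≤ min (δ/2) 1 :=
      hr₁' f hmf (fun x hx => le_trans (hcf x hx) (min_le_left _ _))
    have h2 : dist (f^[n] 0) y < δ := by
      rw [Real.dist_eq]
      have := le_trans h1 (min_le_left _ _)
      linarith
    have h3 : dist (f₀ (f^[n] 0)) (f₀ y) < ε/2 := hδ' hxI h2
    rw [Function.iterate_succ_apply', Function.iterate_succ_apply']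
    have h4 : |f (f^[n] 0) - f₀ (f^[n] 0)| ≤ ε/2 :=
      le_trans (hcf _ hxI) (min_le_right _ _)
    rw [Real.dist_eq] at h3
    calc |f (f^[n] 0) - f₀ y|
        ≤ |f (f^[n] 0) - f₀ (f^[n] 0)| + |f₀ (f^[n] 0) - f₀ y| := abs_sub_le _ _ _
      _ ≤ ε/2 + ε/2 := add_le_add h4 (le_of_lt h3)
      _ = ε := by ring

/-- Lower bound on `|Df|` from `PEUnimodal`. -/
lemma abs_Df_lower {f Df : ℝ → ℝ} {lam : ℝ} (hf : PEUnimodal f Df lam) :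
    ∀ x ∈ Set.Icc (-1 : ℝ) 1, x ≠ 0 → lam ≤ |Df x| := by
  intro x hx hx0
  rcases lt_or_gt_of_ne hx0 with h | h
  · have := (hf.2.2.2.2.2.2.2.2.1 x ⟨hx.1, h⟩).2
    exact this.trans (le_abs_self _)
  · have := (hf.2.2.2.2.2.2.2.2.2 x ⟨h, hx.2⟩).2
    calc lam ≤ -Df x := by linarith
    _ ≤ |Df x| := neg_le_abs _

lemma key_close (f₀ Df₀ : ℝ → ℝ) (lam₀ : ℝ) (hf₀ : PEUnimodal f₀ Df₀ lam₀)
    (hnonper : ∀ i : ℕ, 1 ≤ i → f₀^[i] 0 ≠ 0) (j : ℕ) (hj : 1 ≤ j)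
    (ε : ℝ) (hε : 0 < ε) :
    ∃ r > (0:ℝ), ∀ f Df : ℝ → ℝ,
      Set.MapsTo f (Set.Icc (-1 : ℝ) 1) (Set.Icc (-1 : ℝ) 1) →
      (∀ x ∈ Set.Icc (-1 : ℝ) 1, |f x - f₀ x| ≤ r) →
      (∀ x ∈ Set.Icc (-1 : ℝ) 1, x ≠ 0 → |Df x - Df₀ x| ≤ r) →
      |f^[j] 0 - f₀^[j] 0| ≤ ε ∧ |f^[j] 0 - f₀^[j] 0| < |f₀^[j] 0| ∧
        |Df (f^[j] 0) - Df₀ (f₀^[j] 0)| ≤ ε := by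
  set y := f₀^[j] 0 with hy
  have hy0 : y ≠ 0 := hnonper j hj
  have hyI : y ∈ Set.Icc (-1 : ℝ) 1 := orbit_mem_Icc hf₀.2.1 j
  have hyabs : 0 < |y| := abs_pos.mpr hy0
  have hδ : ∃ δ > (0:ℝ), ∀ z ∈ Set.Icc (-1 : ℝ) 1, z ≠ 0 → |z - y| < |y| →
      |z - y| < δ → |Df₀ z - Df₀ y| < ε / 2 := by
    rcases lt_or_gt_of_ne hy0 with h | h
    · have hyS : y ∈ Set.Ico (-1 : ℝ) 0 := ⟨hyI.1, h⟩
      have hcy := hf₀.2.2.2.2.2.2.1 y hyS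
      rw [Metric.continuousWithinAt_iff] at hcy
      obtain ⟨δ, hδ0, hδ'⟩ := hcy (ε/2) (by linarith)
      refine ⟨δ, hδ0, fun z hz hz0 hzy hzδ => ?_⟩
      have hzneg : z < 0 := by
        have : z - y < -y := lt_of_le_of_lt (le_abs_self _) (by rwa [abs_of_neg h] at hzy)
        linarith
      have hzS : z ∈ Set.Ico (-1 : ℝ) 0 := ⟨hz.1, hzneg⟩
      have := hδ' hzS (by rwa [Real.dist_eq])
      rwa [Real.dist_eq] at this
    · have hyS : y ∈ Set.Ioc (0 : ℝ) 1 := ⟨h, hyI.2⟩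
      have hcy := hf₀.2.2.2.2.2.2.2.1 y hyS
      rw [Metric.continuousWithinAt_iff] at hcy
      obtain ⟨δ, hδ0, hδ'⟩ := hcy (ε/2) (by linarith)
      refine ⟨δ, hδ0, fun z hz hz0 hzy hzδ => ?_⟩
      have hzpos : 0 < z := by
        have : y - z < y := by
          have h2 : y - z ≤ |z - y| := by rw [abs_sub_comm]; exact le_abs_self _
          rw [abs_of_pos h] at hzy; linarith
        linarith
      have hzS : z ∈ Set.Ioc (0 : ℝ) 1 := ⟨hzpos, hz.2⟩
      have := hδ' hzS (by rwa [Real.dist_eq])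
      rwa [Real.dist_eq] at this
  obtain ⟨δ, hδ0, hδ'⟩ := hδ
  obtain ⟨r₁, hr₁, hr₁'⟩ := orbit_close hf₀.2.2.2.2.2.1 hf₀.2.1 j
    (min (δ/2) (min ε (|y|/2))) (by positivity)
  refine ⟨min r₁ (ε/2), by positivity, fun f Df hmf hcf hcD => ?_⟩
  have hxI : f^[j] 0 ∈ Set.Icc (-1 : ℝ) 1 := orbit_mem_Icc hmf j
  have h1 : |f^[j] 0 - y| ≤ min (δ/2) (min ε (|y|/2)) :=
    hr₁' f hmf (fun x hx => le_trans (hcf x hx) (min_le_left _ _))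
  have h1ε : |f^[j] 0 - y| ≤ ε := le_trans h1 ((min_le_right _ _).trans (min_le_left _ _))
  have h1y : |f^[j] 0 - y| < |y| :=
    lt_of_le_of_lt (le_trans h1 ((min_le_right _ _).trans (min_le_right _ _))) (by linarith)
  have h1δ : |f^[j] 0 - y| < δ := lt_of_le_of_lt (le_trans h1 (min_le_left _ _)) (by linarith)
  have hx0 : f^[j] 0 ≠ 0 := by
    intro h0
    rw [h0] at h1y
    simp at h1y
  refine ⟨h1ε, h1y, ?_⟩
  have h2 : |Df₀ (f^[j] 0) - Df₀ y| < ε/2 := hδ' _ hxI hx0 h1y h1δ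
  have h3 : |Df (f^[j] 0) - Df₀ (f^[j] 0)| ≤ ε/2 :=
    le_trans (hcD _ hxI hx0) (min_le_right _ _)
  calc |Df (f^[j] 0) - Df₀ y|
      ≤ |Df (f^[j] 0) - Df₀ (f^[j] 0)| + |Df₀ (f^[j] 0) - Df₀ y| := abs_sub_le _ _ _
    _ ≤ ε/2 + ε/2 := add_le_add h3 (le_of_lt h2)
    _ = ε := by ring

lemma key_close_all (f₀ Df₀ : ℝ → ℝ) (lam₀ : ℝ) (hf₀ : PEUnimodal f₀ Df₀ lam₀)
    (hnonper : ∀ i : ℕ, 1 ≤ i → f₀^[i] 0 ≠ 0) (N : ℕ) (ε : ℝ) (hε : 0 < ε) :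
    ∃ r > (0:ℝ), ∀ f Df : ℝ → ℝ,
      Set.MapsTo f (Set.Icc (-1 : ℝ) 1) (Set.Icc (-1 : ℝ) 1) →
      (∀ x ∈ Set.Icc (-1 : ℝ) 1, |f x - f₀ x| ≤ r) →
      (∀ x ∈ Set.Icc (-1 : ℝ) 1, x ≠ 0 → |Df x - Df₀ x| ≤ r) →
      ∀ j : ℕ, 1 ≤ j → j ≤ N →
      |f^[j] 0 - f₀^[j] 0| ≤ ε ∧ |f^[j] 0 - f₀^[j] 0| < |f₀^[j] 0| ∧
        |Df (f^[j] 0) - Df₀ (f₀^[j] 0)| ≤ ε := by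
  induction N with
  | zero => exact ⟨1, one_pos, fun f Df _ _ _ j hj hj0 => by omega⟩
  | succ n ih =>
    obtain ⟨r₁, hr₁, hr₁'⟩ := ih
    obtain ⟨r₂, hr₂, hr₂'⟩ := key_close f₀ Df₀ lam₀ hf₀ hnonper (n+1) (by omega) ε hε
    refine ⟨min r₁ r₂, by positivity, fun f Df hm h1 h2 j hj hjn => ?_⟩
    rcases Nat.lt_or_ge j (n+1) with h | h
    · exact hr₁' f Df hm (fun x hx => (h1 x hx).trans (min_le_left _ _))
        (fun x hx hx0 => (h2 x hx hx0).trans (min_le_left _ _)) j hj (by omega)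
    · have heq : j = n+1 := le_antisymm hjn h
      subst heq
      exact hr₂' f Df hm (fun x hx => (h1 x hx).trans (min_le_right _ _))
        (fun x hx hx0 => (h2 x hx hx0).trans (min_le_right _ _))

lemma tsum_shift_geom {x Cv : ℝ} (h0 : 0 ≤ x) (h1 : x < 1) (N : ℕ) :
    ∑' i : ℕ, Cv * x ^ (N + i) = Cv * (x ^ N * (1 - x)⁻¹) := by
  have h : ∀ i : ℕ, Cv * x ^ (N + i) = (Cv * x ^ N) * x ^ i := by
    intro i; rw [pow_add]; ring
  rw [tsum_congr h, tsum_mul_left, tsum_geometric_of_lt_one h0 h1]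
  ring

lemma geom_Ico_bound {x Cv : ℝ} (hCv : 0 ≤ Cv) (h0 : 0 ≤ x) (h1 : x < 1)
    {N p : ℕ} {c : ℕ → ℝ} (hc : ∀ i, i < p → |c i| ≤ Cv * x ^ i) :
    |∑ i ∈ Finset.Ico N p, c i| ≤ Cv * (x ^ N * (1 - x)⁻¹) := by
  have hsum : Summable (fun i : ℕ => Cv * x ^ (N + i)) := by
    have : Summable (fun i : ℕ => (Cv * x ^ N) * x ^ i) :=
      (summable_geometric_of_lt_one h0 h1).mul_left _
    refine this.congr (fun i => by rw [pow_add]; ring)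
  calc |∑ i ∈ Finset.Ico N p, c i| ≤ ∑ i ∈ Finset.Ico N p, |c i| :=
        Finset.abs_sum_le_sum_abs _ _
    _ ≤ ∑ i ∈ Finset.Ico N p, Cv * x ^ i :=
        Finset.sum_le_sum (fun i hi => hc i (Finset.mem_Ico.mp hi).2)
    _ = ∑ i ∈ Finset.range (p - N), Cv * x ^ (N + i) := by
        rw [Finset.sum_Ico_eq_sum_range]
    _ ≤ ∑' i : ℕ, Cv * x ^ (N + i) :=
        Summable.sum_le_tsum _ (fun i _ => by positivity) hsum
    _ = Cv * (x ^ N * (1 - x)⁻¹) := tsum_shift_geom h0 h1 N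

lemma geom_tail_tsum {x Cv : ℝ} (h0 : 0 ≤ x) (h1 : x < 1)
    (N : ℕ) {c : ℕ → ℝ} (hc : ∀ i, |c i| ≤ Cv * x ^ i) :
    Summable c ∧
      |∑' i : ℕ, c i - ∑ i ∈ Finset.range N, c i| ≤ Cv * (x ^ N * (1 - x)⁻¹) := by
  have hg : Summable (fun i : ℕ => Cv * x ^ i) :=
    (summable_geometric_of_lt_one h0 h1).mul_left _
  have hsc : Summable c :=
    Summable.of_norm_bounded hg (fun i => by simpa [Real.norm_eq_abs] using hc i)
  refine ⟨hsc, ?_⟩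
  have hsplit : ∑ i ∈ Finset.range N, c i + ∑' i : ℕ, c (i + N) = ∑' i : ℕ, c i :=
    hsc.sum_add_tsum_nat_add N
  have hshift : Summable (fun i : ℕ => c (i + N)) := (summable_nat_add_iff N).mpr hsc
  have habs : Summable (fun i : ℕ => |c (i + N)|) := hshift.abs
  have hgs : Summable (fun i : ℕ => Cv * x ^ (N + i)) := by
    have : Summable (fun i : ℕ => (Cv * x ^ N) * x ^ i) :=
      (summable_geometric_of_lt_one h0 h1).mul_left _
    exact this.congr (fun i => by rw [pow_add]; ring)
  have heq : ∑' i : ℕ, c i - ∑ i ∈ Finset.range N, c i = ∑' i : ℕ, c (i + N) := by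
    linarith
  rw [heq]
  calc |∑' i : ℕ, c (i + N)| ≤ ∑' i : ℕ, |c (i + N)| := by
        simpa [Real.norm_eq_abs] using norm_tsum_le_tsum_norm (f := fun i => c (i + N))
          (by simpa [Real.norm_eq_abs] using habs)
    _ ≤ ∑' i : ℕ, Cv * x ^ (N + i) :=
        Summable.tsum_le_tsum (fun i => by simpa [Nat.add_comm] using hc (i + N)) habs hgs
    _ = Cv * (x ^ N * (1 - x)⁻¹) := tsum_shift_geom h0 h1 N

lemma term_abs_bound {vx P μ Cv : ℝ} (i : ℕ) (hμ : 0 < μ) (hCv : 0 ≤ Cv)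
    (hvx : |vx| ≤ Cv) (hP : μ ^ i ≤ |P|) : |vx / P| ≤ Cv * (1/μ) ^ i := by
  rw [abs_div]
  calc |vx| / |P| ≤ Cv / μ ^ i := div_le_div₀ hCv hvx (pow_pos hμ i) hP
    _ = Cv * (1/μ) ^ i := by rw [div_eq_mul_inv, one_div, inv_pow]

lemma term_diff_bound {vx vy P Q ε₁ Cv : ℝ}
    (hCv : 0 ≤ Cv) (hε₁ : 0 ≤ ε₁)
    (hP : 1 ≤ |P|) (hQ : 1 ≤ |Q|)
    (hvy : |vy| ≤ Cv) (hvd : |vx - vy| ≤ Cv * ε₁) (hPQ : |P - Q| ≤ ε₁) :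
    |vx / P - vy / Q| ≤ Cv * (2 * ε₁) := by
  have hPne : P ≠ 0 := by intro h; rw [h] at hP; simp at hP; linarith
  have hQne : Q ≠ 0 := by intro h; rw [h] at hQ; simp at hQ; linarith
  have hid : vx/P - vy/Q = (vx - vy)/P + vy*((Q - P)/(P*Q)) := by
    field_simp
    ring
  rw [hid]
  have h1 : |(vx - vy)/P| ≤ Cv * ε₁ := by
    rw [abs_div]
    have hd : |vx - vy| / |P| ≤ |vx - vy| := div_le_self (abs_nonneg _) hP
    linarith
  have h2 : |vy*((Q - P)/(P*Q))| ≤ Cv * ε₁ := by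
    rw [abs_mul, abs_div, abs_mul]
    have hPQ1 : 1 ≤ |P| * |Q| := by nlinarith
    have hQP : |Q - P| ≤ ε₁ := by rwa [abs_sub_comm]
    have hstep : |Q - P| / (|P| * |Q|) ≤ ε₁ :=
      le_trans (div_le_self (abs_nonneg _) hPQ1) hQP
    exact mul_le_mul hvy hstep (div_nonneg (abs_nonneg _) (by positivity)) hCv
  calc |(vx - vy)/P + vy*((Q - P)/(P*Q))|
      ≤ |(vx - vy)/P| + |vy*((Q - P)/(P*Q))| := abs_add_le _ _
    _ ≤ Cv * ε₁ + Cv * ε₁ := add_le_add h1 h2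
    _ = Cv * (2 * ε₁) := by ring

/-- Proposition 3.2 A: if the critical point of `f₀` is not periodic,
then for every `η > 0` there is a C¹-neighborhood of `f₀` (radius `r` in sup norm on the
map and on its piecewise derivative) such that `|J(f,v) - J(f₀,v)| ≤ η·|v|₁` for every
piecewise C¹ function `v` (with `Cv` a bound for both `sup |v|` and the Lipschitz
constants of `v` on the two halves, as provided by `|v|₁`) and every piecewise expanding
unimodal `f` in that neighborhood. -/
theorem J_continuous_at_nonperiodic
    (f₀ Df₀ : ℝ → ℝ) (lam₀ : ℝ) (hf₀ : PEUnimodal f₀ Df₀ lam₀)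
    (hnonper : ∀ i : ℕ, 1 ≤ i → f₀^[i] 0 ≠ 0) :
    ∀ η > (0 : ℝ), ∃ r > (0 : ℝ), ∀ (f Df : ℝ → ℝ) (lam : ℝ),
      PEUnimodal f Df lam →
      (∀ x ∈ Set.Icc (-1 : ℝ) 1, |f x - f₀ x| ≤ r) →
      (∀ x ∈ Set.Icc (-1 : ℝ) 1, x ≠ 0 → |Df x - Df₀ x| ≤ r) →
      ∀ (v : ℝ → ℝ) (Cv : ℝ),
        (∀ x ∈ Set.Icc (-1 : ℝ) 1, |v x| ≤ Cv) →
        LipschitzOnWith (Real.toNNReal Cv) v (Set.Icc (-1 : ℝ) 0) →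
        LipschitzOnWith (Real.toNNReal Cv) v (Set.Icc (0 : ℝ) 1) →
        |Jfun f Df v - Jfun f₀ Df₀ v| ≤ η * Cv := by
  intro η hη
  have hlam₀ : 1 < lam₀ := hf₀.1
  have hm₀ : Set.MapsTo f₀ (Set.Icc (-1 : ℝ) 1) (Set.Icc (-1 : ℝ) 1) := hf₀.2.1
  set μ : ℝ := (1 + lam₀)/2 with hμdef
  have hμ1 : 1 < μ := by rw [hμdef]; linarith
  have hμlam : μ < lam₀ := by rw [hμdef]; linarith
  have hμ0 : 0 < μ := by linarith
  have hx0 : (0:ℝ) ≤ 1/μ := by positivity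
  have hx1 : 1/μ < 1 := (div_lt_one hμ0).mpr hμ1
  set C : ℝ := (1 - 1/μ)⁻¹ with hCdef
  have hC : 0 < C := by rw [hCdef]; exact inv_pos.mpr (by linarith)
  obtain ⟨N, hNpow⟩ : ∃ N : ℕ, (1/μ)^N * C ≤ η/4 := by
    obtain ⟨N, hN⟩ := exists_pow_lt_of_lt_one (show (0:ℝ) < η/(4*C) by positivity) hx1
    refine ⟨N, ?_⟩
    have := mul_lt_mul_of_pos_right hN hC
    have heq : (η/(4*C)) * C = η/4 := by field_simp
    linarith [heq ▸ this]
  set M : ℝ := 1 + ∑ j ∈ Finset.Icc 1 N, |Df₀ (f₀^[j] 0)| with hMdef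
  have hsumM : (0:ℝ) ≤ ∑ j ∈ Finset.Icc 1 N, |Df₀ (f₀^[j] 0)| :=
    Finset.sum_nonneg (fun j _ => abs_nonneg _)
  have hM1 : 1 ≤ M := by rw [hMdef]; linarith
  have hM0 : 0 ≤ M := le_trans zero_le_one hM1
  set A : ℝ := (N:ℝ) * M^N with hAdef
  have hA0 : 0 ≤ A := mul_nonneg (Nat.cast_nonneg _) (pow_nonneg hM0 _)
  set ε₁ : ℝ := η/(4*((N:ℝ)+1)) with hε₁def
  have hε₁ : 0 < ε₁ := by rw [hε₁def]; positivity
  set ε₂ : ℝ := ε₁/(A+1) with hε₂def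
  have hε₂ : 0 < ε₂ := by rw [hε₂def]; positivity
  set ε : ℝ := min ε₁ (min ε₂ 1) with hεdef
  have hεpos : 0 < ε := by rw [hεdef]; positivity
  obtain ⟨r₁, hr₁0, hr₁⟩ := key_close_all f₀ Df₀ lam₀ hf₀ hnonper N ε hεpos
  refine ⟨min r₁ (lam₀ - μ), lt_min hr₁0 (by linarith), ?_⟩
  intro f Df lam hf hclosef hcloseD v Cv hv hLipL hLipR
  have hmf : Set.MapsTo f (Set.Icc (-1 : ℝ) 1) (Set.Icc (-1 : ℝ) 1) := hf.2.1
  have hCv : 0 ≤ Cv := le_trans (abs_nonneg _) (hv 0 (by norm_num))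
  have hclosef' : ∀ x ∈ Set.Icc (-1 : ℝ) 1, |f x - f₀ x| ≤ r₁ :=
    fun x hx => (hclosef x hx).trans (min_le_left _ _)
  have hcloseD' : ∀ x ∈ Set.Icc (-1 : ℝ) 1, x ≠ 0 → |Df x - Df₀ x| ≤ r₁ :=
    fun x hx hx0 => (hcloseD x hx hx0).trans (min_le_left _ _)
  have hkey := hr₁ f Df hmf hclosef' hcloseD'
  -- μ-lower bound for Df at nonzero points
  have hDflow : ∀ z ∈ Set.Icc (-1 : ℝ) 1, z ≠ 0 → μ ≤ |Df z| := by
    intro z hz hz0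
    have h1 : lam₀ ≤ |Df₀ z| := abs_Df_lower hf₀ z hz hz0
    have h2 : |Df z - Df₀ z| ≤ lam₀ - μ := (hcloseD z hz hz0).trans (min_le_right _ _)
    have h3 : |Df₀ z| - |Df z| ≤ |Df₀ z - Df z| := abs_sub_abs_le_abs_sub _ _
    rw [abs_sub_comm] at h3
    linarith
  -- nonvanishing of the f-orbit up to N
  have hxne : ∀ j : ℕ, 1 ≤ j → j ≤ N → f^[j] 0 ≠ 0 := by
    intro j hj hjN h0
    have := (hkey j hj hjN).2.1
    rw [h0] at this
    simp at this
  -- bounds on products from below (for f₀)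
  have hQlow : ∀ i : ℕ, μ ^ i ≤ |∏ j ∈ Finset.Icc 1 i, Df₀ (f₀^[j] 0)| := by
    intro i
    have h := abs_prod_lower (s := Finset.Icc 1 i) (g := fun j => Df₀ (f₀^[j] 0))
      (c := μ) (le_of_lt hμ0) (fun j hj => ?_)
    · rwa [Nat.card_Icc, Nat.add_sub_cancel] at h
    · have hj1 : 1 ≤ j := (Finset.mem_Icc.mp hj).1
      have := abs_Df_lower hf₀ _ (orbit_mem_Icc hm₀ j) (hnonper j hj1)
      linarith
  -- Jfun for f₀ is the tsum
  have h₀per : ¬∃ p : ℕ, 0 < p ∧ f₀^[p] 0 = 0 := by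
    rintro ⟨p, hp, h0⟩
    exact hnonper p hp h0
  have hJ₀eq : Jfun f₀ Df₀ v =
      ∑' i : ℕ, v (f₀^[i] 0) / ∏ j ∈ Finset.Icc 1 i, Df₀ (f₀^[j] 0) := by
    simp only [Jfun]
    rw [dif_neg h₀per]
  have hb : ∀ i : ℕ,
      |v (f₀^[i] 0) / ∏ j ∈ Finset.Icc 1 i, Df₀ (f₀^[j] 0)| ≤ Cv * (1/μ)^i :=
    fun i => term_abs_bound i hμ0 hCv (hv _ (orbit_mem_Icc hm₀ i)) (hQlow i)
  obtain ⟨hsb, hJ₀tail⟩ := geom_tail_tsum hx0 hx1 N hb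
  -- Jfun for f: distance to its partial sum
  have hJftail : |Jfun f Df v -
      ∑ i ∈ Finset.range N, v (f^[i] 0) / ∏ j ∈ Finset.Icc 1 i, Df (f^[j] 0)| ≤
      Cv * ((1/μ)^N * (1 - 1/μ)⁻¹) := by
    have hPlow : ∀ i : ℕ, (∀ j : ℕ, 1 ≤ j → j ≤ i → f^[j] 0 ≠ 0) →
        μ ^ i ≤ |∏ j ∈ Finset.Icc 1 i, Df (f^[j] 0)| := by
      intro i hne
      have h := abs_prod_lower (s := Finset.Icc 1 i) (g := fun j => Df (f^[j] 0))
        (c := μ) (le_of_lt hμ0) (fun j hj => ?_)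
      · rwa [Nat.card_Icc, Nat.add_sub_cancel] at h
      · obtain ⟨hj1, hji⟩ := Finset.mem_Icc.mp hj
        exact hDflow _ (orbit_mem_Icc hmf j) (hne j hj1 hji)
    by_cases hper : ∃ p : ℕ, 0 < p ∧ f^[p] 0 = 0
    · have hJfeq : Jfun f Df v = ∑ i ∈ Finset.range (Nat.find hper),
          v (f^[i] 0) / ∏ j ∈ Finset.Icc 1 i, Df (f^[j] 0) := by
        simp only [Jfun]
        rw [dif_pos hper]
      set p := Nat.find hper with hpdef
      have hpspec : 0 < p ∧ f^[p] 0 = 0 := Nat.find_spec hper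
      have hxj0 : ∀ j : ℕ, 1 ≤ j → j < p → f^[j] 0 ≠ 0 := by
        intro j hj hjp h0
        exact Nat.find_min hper hjp ⟨hj, h0⟩
      have hNp : N < p := by
        by_contra hle
        push_neg at hle
        exact hxne p hpspec.1 hle hpspec.2
      have ha : ∀ i : ℕ, i < p →
          |v (f^[i] 0) / ∏ j ∈ Finset.Icc 1 i, Df (f^[j] 0)| ≤ Cv * (1/μ)^i := by
        intro i hip
        exact term_abs_bound i hμ0 hCv (hv _ (orbit_mem_Icc hmf i))
          (hPlow i (fun j hj1 hji => hxj0 j hj1 (lt_of_le_of_lt hji hip)))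
      rw [hJfeq]
      have hsplit : ∑ i ∈ Finset.range p,
            (v (f^[i] 0) / ∏ j ∈ Finset.Icc 1 i, Df (f^[j] 0)) =
          ∑ i ∈ Finset.range N, (v (f^[i] 0) / ∏ j ∈ Finset.Icc 1 i, Df (f^[j] 0)) +
          ∑ i ∈ Finset.Ico N p, (v (f^[i] 0) / ∏ j ∈ Finset.Icc 1 i, Df (f^[j] 0)) := by
        rw [Finset.range_eq_Ico, Finset.range_eq_Ico]
        exact (Finset.sum_Ico_consecutive (fun i => v (f^[i] 0) / ∏ j ∈ Finset.Icc 1 i, Df (f^[j] 0)) (Nat.zero_le N) (le_of_lt hNp)).symm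
      rw [hsplit]
      simpa using geom_Ico_bound hCv hx0 hx1 (N := N) (p := p) ha
    · have hJfeq : Jfun f Df v =
          ∑' i : ℕ, v (f^[i] 0) / ∏ j ∈ Finset.Icc 1 i, Df (f^[j] 0) := by
        simp only [Jfun]
        rw [dif_neg hper]
      have hxall : ∀ j : ℕ, 1 ≤ j → f^[j] 0 ≠ 0 := by
        intro j hj h0
        exact hper ⟨j, hj, h0⟩
      have ha : ∀ i : ℕ,
          |v (f^[i] 0) / ∏ j ∈ Finset.Icc 1 i, Df (f^[j] 0)| ≤ Cv * (1/μ)^i := by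
        intro i
        exact term_abs_bound i hμ0 hCv (hv _ (orbit_mem_Icc hmf i))
          (hPlow i (fun j hj1 _ => hxall j hj1))
      obtain ⟨_, htail⟩ := geom_tail_tsum hx0 hx1 N ha
      rw [hJfeq]
      exact htail
  -- Head comparison
  have hterm : ∀ i ∈ Finset.range N,
      |v (f^[i] 0) / ∏ j ∈ Finset.Icc 1 i, Df (f^[j] 0) -
        v (f₀^[i] 0) / ∏ j ∈ Finset.Icc 1 i, Df₀ (f₀^[j] 0)| ≤ Cv * (2 * ε₁) := by
    intro i hi
    have hiN : i ≤ N := le_of_lt (Finset.mem_range.mp hi)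
    rcases Nat.eq_zero_or_pos i with h0 | h0
    · subst h0
      have hempty : Finset.Icc 1 0 = (∅ : Finset ℕ) := by
        apply Finset.Icc_eq_empty
        norm_num
      simp only [Function.iterate_zero_apply, hempty, Finset.prod_empty, div_one,
        sub_self, abs_zero]
      positivity
    · -- 1 ≤ i ≤ N
      have hP1 : 1 ≤ |∏ j ∈ Finset.Icc 1 i, Df (f^[j] 0)| := by
        have hPlow : μ ^ i ≤ |∏ j ∈ Finset.Icc 1 i, Df (f^[j] 0)| := by
          have h := abs_prod_lower (s := Finset.Icc 1 i) (g := fun j => Df (f^[j] 0))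
            (c := μ) (le_of_lt hμ0) (fun j hj => ?_)
          · rwa [Nat.card_Icc, Nat.add_sub_cancel] at h
          · obtain ⟨hj1, hji⟩ := Finset.mem_Icc.mp hj
            exact hDflow _ (orbit_mem_Icc hmf j) (hxne j hj1 (le_trans hji hiN))
        have : (1:ℝ) ≤ μ ^ i := one_le_pow₀ (le_of_lt hμ1)
        linarith
      have hQ1 : 1 ≤ |∏ j ∈ Finset.Icc 1 i, Df₀ (f₀^[j] 0)| := by
        have : (1:ℝ) ≤ μ ^ i := one_le_pow₀ (le_of_lt hμ1)
        linarith [hQlow i]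
      -- Lipschitz estimate for v
      have hxiyi : |f^[i] 0 - f₀^[i] 0| ≤ ε := (hkey i h0 hiN).1
      have hxiyi' : |f^[i] 0 - f₀^[i] 0| < |f₀^[i] 0| := (hkey i h0 hiN).2.1
      have hxiI : f^[i] 0 ∈ Set.Icc (-1 : ℝ) 1 := orbit_mem_Icc hmf i
      have hyiI : f₀^[i] 0 ∈ Set.Icc (-1 : ℝ) 1 := orbit_mem_Icc hm₀ i
      have hvd : |v (f^[i] 0) - v (f₀^[i] 0)| ≤ Cv * ε₁ := by
        have hvlip : |v (f^[i] 0) - v (f₀^[i] 0)| ≤ Cv * |f^[i] 0 - f₀^[i] 0| := by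
          rcases lt_or_gt_of_ne (hnonper i h0) with hy | hy
          · have hxneg : f^[i] 0 < 0 := by
              have : f^[i] 0 - f₀^[i] 0 < -f₀^[i] 0 :=
                lt_of_le_of_lt (le_abs_self _) (by rwa [abs_of_neg hy] at hxiyi')
              linarith
            have hmem1 : f^[i] 0 ∈ Set.Icc (-1 : ℝ) 0 := ⟨hxiI.1, le_of_lt hxneg⟩
            have hmem2 : f₀^[i] 0 ∈ Set.Icc (-1 : ℝ) 0 := ⟨hyiI.1, le_of_lt hy⟩
            have := hLipL.dist_le_mul _ hmem1 _ hmem2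
            rwa [Real.dist_eq, Real.dist_eq, Real.coe_toNNReal Cv hCv] at this
          · have hxpos : 0 < f^[i] 0 := by
              have h2 : f₀^[i] 0 - f^[i] 0 ≤ |f^[i] 0 - f₀^[i] 0| := by
                rw [abs_sub_comm]; exact le_abs_self _
              rw [abs_of_pos hy] at hxiyi'
              linarith
            have hmem1 : f^[i] 0 ∈ Set.Icc (0 : ℝ) 1 := ⟨le_of_lt hxpos, hxiI.2⟩
            have hmem2 : f₀^[i] 0 ∈ Set.Icc (0 : ℝ) 1 := ⟨le_of_lt hy, hyiI.2⟩
            have := hLipR.dist_le_mul _ hmem1 _ hmem2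
            rwa [Real.dist_eq, Real.dist_eq, Real.coe_toNNReal Cv hCv] at this
        have hεε₁ : ε ≤ ε₁ := min_le_left _ _
        calc |v (f^[i] 0) - v (f₀^[i] 0)| ≤ Cv * |f^[i] 0 - f₀^[i] 0| := hvlip
          _ ≤ Cv * ε₁ := mul_le_mul_of_nonneg_left (hxiyi.trans hεε₁) hCv
      -- product difference estimate
      have hPQ : |(∏ j ∈ Finset.Icc 1 i, Df (f^[j] 0)) -
          ∏ j ∈ Finset.Icc 1 i, Df₀ (f₀^[j] 0)| ≤ ε₁ := by
        have hDfyM : ∀ j ∈ Finset.Icc 1 i, |Df₀ (f₀^[j] 0)| ≤ M - 1 := by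
          intro j hj
          obtain ⟨hj1, hji⟩ := Finset.mem_Icc.mp hj
          have hjN : j ∈ Finset.Icc 1 N := Finset.mem_Icc.mpr ⟨hj1, le_trans hji hiN⟩
          have := Finset.single_le_sum (f := fun k => |Df₀ (f₀^[k] 0)|)
            (fun k _ => abs_nonneg _) hjN
          rw [hMdef]; linarith
        have hdiff : ∀ j ∈ Finset.Icc 1 i,
            |Df (f^[j] 0) - Df₀ (f₀^[j] 0)| ≤ ε := by
          intro j hj
          obtain ⟨hj1, hji⟩ := Finset.mem_Icc.mp hj
          exact (hkey j hj1 (le_trans hji hiN)).2.2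
        have hDfxM : ∀ j ∈ Finset.Icc 1 i, |Df (f^[j] 0)| ≤ M := by
          intro j hj
          have h1 := hdiff j hj
          have h2 := hDfyM j hj
          have h3 : ε ≤ 1 := le_trans (min_le_right _ _) (min_le_right _ _)
          have h4 : |Df (f^[j] 0)| - |Df₀ (f₀^[j] 0)| ≤ |Df (f^[j] 0) - Df₀ (f₀^[j] 0)| :=
            abs_sub_abs_le_abs_sub _ _
          linarith
        have hDfyM' : ∀ j ∈ Finset.Icc 1 i, |Df₀ (f₀^[j] 0)| ≤ M := by
          intro j hj
          have := hDfyM j hj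
          linarith
        have hprod := abs_prod_diff hM1 (le_of_lt hεpos) hDfxM hDfyM' hdiff
        rw [Nat.card_Icc, Nat.add_sub_cancel] at hprod
        have hstep1 : (i:ℝ) * M ^ i * ε ≤ A * ε₂ := by
          have hi1 : (i:ℝ) ≤ (N:ℝ) := Nat.cast_le.mpr hiN
          have hMi : M ^ i ≤ M ^ N := pow_le_pow_right₀ hM1 hiN
          have hεε₂ : ε ≤ ε₂ := le_trans (min_le_right _ _) (min_le_left _ _)
          have hiM : (i:ℝ) * M ^ i ≤ A := by
            rw [hAdef]
            exact mul_le_mul hi1 hMi (pow_nonneg hM0 _) (Nat.cast_nonneg _)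
          exact mul_le_mul hiM hεε₂ (le_of_lt hεpos) hA0
        have hstep2 : A * ε₂ ≤ ε₁ := by
          have hdiv : A / (A + 1) ≤ 1 := by
            rw [div_le_one (by linarith)]; linarith
          have heq2 : A * ε₂ = ε₁ * (A / (A + 1)) := by
            rw [hε₂def]; ring
          rw [heq2]
          calc ε₁ * (A/(A+1)) ≤ ε₁ * 1 :=
                mul_le_mul_of_nonneg_left hdiv (le_of_lt hε₁)
            _ = ε₁ := mul_one _
        linarith
      exact term_diff_bound hCv (le_of_lt hε₁) hP1 hQ1
        (hv _ hyiI) hvd hPQ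
  have hhead : |∑ i ∈ Finset.range N,
        (v (f^[i] 0) / ∏ j ∈ Finset.Icc 1 i, Df (f^[j] 0)) -
      ∑ i ∈ Finset.range N,
        (v (f₀^[i] 0) / ∏ j ∈ Finset.Icc 1 i, Df₀ (f₀^[j] 0))| ≤ η/2 * Cv := by
    rw [← Finset.sum_sub_distrib]
    refine le_trans (Finset.abs_sum_le_sum_abs _ _) ?_
    refine le_trans (Finset.sum_le_sum hterm) ?_
    rw [Finset.sum_const, Finset.card_range, nsmul_eq_mul]
    have hkeyN : (N:ℝ) * (2 * ε₁) ≤ η/2 := by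
      have hN1 : (0:ℝ) < (N:ℝ) + 1 := by positivity
      have heq : (N:ℝ) * (2 * ε₁) = (η/2) * ((N:ℝ)/((N:ℝ)+1)) := by
        rw [hε₁def]; field_simp; ring
      rw [heq]
      have hd1 : (N:ℝ)/((N:ℝ)+1) ≤ 1 := by
        rw [div_le_one hN1]; linarith
      calc (η/2) * ((N:ℝ)/((N:ℝ)+1)) ≤ (η/2) * 1 :=
            mul_le_mul_of_nonneg_left hd1 (by linarith)
        _ = η/2 := mul_one _
    calc (N:ℝ) * (Cv * (2 * ε₁)) = Cv * ((N:ℝ) * (2 * ε₁)) := by ring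
      _ ≤ Cv * (η/2) := mul_le_mul_of_nonneg_left hkeyN hCv
      _ = η/2 * Cv := by ring
  -- Put everything together
  have hJ₀tail' : |Jfun f₀ Df₀ v - ∑ i ∈ Finset.range N,
      (v (f₀^[i] 0) / ∏ j ∈ Finset.Icc 1 i, Df₀ (f₀^[j] 0))| ≤ Cv * (η/4) := by
    rw [hJ₀eq]
    refine le_trans hJ₀tail ?_
    exact mul_le_mul_of_nonneg_left hNpow hCv
  have hJftail' : |Jfun f Df v - ∑ i ∈ Finset.range N,
      (v (f^[i] 0) / ∏ j ∈ Finset.Icc 1 i, Df (f^[j] 0))| ≤ Cv * (η/4) := by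
    refine le_trans hJftail ?_
    exact mul_le_mul_of_nonneg_left hNpow hCv
  have htri : |Jfun f Df v - Jfun f₀ Df₀ v| ≤
      |Jfun f Df v - ∑ i ∈ Finset.range N,
        (v (f^[i] 0) / ∏ j ∈ Finset.Icc 1 i, Df (f^[j] 0))| +
      |∑ i ∈ Finset.range N,
        (v (f^[i] 0) / ∏ j ∈ Finset.Icc 1 i, Df (f^[j] 0)) -
       ∑ i ∈ Finset.range N,
        (v (f₀^[i] 0) / ∏ j ∈ Finset.Icc 1 i, Df₀ (f₀^[j] 0))| +
      |∑ i ∈ Finset.range N,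
        (v (f₀^[i] 0) / ∏ j ∈ Finset.Icc 1 i, Df₀ (f₀^[j] 0)) - Jfun f₀ Df₀ v| := by
    have h1 := abs_sub_le (Jfun f Df v)
      (∑ i ∈ Finset.range N, (v (f^[i] 0) / ∏ j ∈ Finset.Icc 1 i, Df (f^[j] 0)))
      (Jfun f₀ Df₀ v)
    have h2 := abs_sub_le
      (∑ i ∈ Finset.range N, (v (f^[i] 0) / ∏ j ∈ Finset.Icc 1 i, Df (f^[j] 0)))
      (∑ i ∈ Finset.range N, (v (f₀^[i] 0) / ∏ j ∈ Finset.Icc 1 i, Df₀ (f₀^[j] 0)))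
      (Jfun f₀ Df₀ v)
    linarith
  have hlast : |∑ i ∈ Finset.range N,
      (v (f₀^[i] 0) / ∏ j ∈ Finset.Icc 1 i, Df₀ (f₀^[j] 0)) - Jfun f₀ Df₀ v| ≤
      Cv * (η/4) := by
    rw [abs_sub_comm]
    exact hJ₀tail'
  calc |Jfun f Df v - Jfun f₀ Df₀ v| ≤ Cv * (η/4) + η/2 * Cv + Cv * (η/4) := by
        refine le_trans htri ?_
        exact add_le_add (add_le_add hJftail' hhead) hlast
    _ = η * Cv := by ring
end

section
/- Let f_t be a C^1 family of piecewise expanding C^1 unimodal maps for which the set of critical relations R_t = {(i,j) : f_t^i(c) = f_t^j(c), i < j} is constant for small t. Then the itinerary of the critical point c under f_t is independent of t for small t. -/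
/-- If `f t` is a continuous (e.g. C¹) family of piecewise expanding
unimodal maps for which the set of critical relations
`R_t = {(i,j) : f_t^i(c) = f_t^j(c), i < j}` is constant for `|t| < δ`, then the
itinerary of the critical point `c = 0` (the sequence of symbols `L`/`C`/`R` recording
the sign of `f_t^i(c)`) is independent of `t` for `|t| < δ`. -/
theorem itinerary_constant_of_critical_relations_constant
    (f : ℝ → ℝ → ℝ) (δ : ℝ) (hδ : 0 < δ)
    (hcont : Continuous fun p : ℝ × ℝ => f p.1 p.2)
    (hrel : ∀ t : ℝ, |t| < δ → ∀ i j : ℕ, i < j →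
      ((f t)^[i] 0 = (f t)^[j] 0 ↔ (f 0)^[i] 0 = (f 0)^[j] 0)) :
    ∀ t : ℝ, |t| < δ → ∀ i : ℕ,
      ((f t)^[i] 0 < 0 ↔ (f 0)^[i] 0 < 0) ∧
      ((f t)^[i] 0 = 0 ↔ (f 0)^[i] 0 = 0) ∧
      (0 < (f t)^[i] 0 ↔ 0 < (f 0)^[i] 0) := by
  -- continuity of t ↦ f_t^i(0)
  have hg : ∀ i : ℕ, Continuous fun t : ℝ => (f t)^[i] 0 := by
    intro i
    induction i with
    | zero => simpa using continuous_const
    | succ n ih =>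
      have : (fun t : ℝ => (f t)^[n + 1] 0)
          = fun t : ℝ => f t ((f t)^[n] 0) := by
        funext t; rw [Function.iterate_succ_apply']
      rw [this]
      exact hcont.comp (continuous_id.prodMk ih)
  -- vanishing is constant in t
  have hzero : ∀ t : ℝ, |t| < δ → ∀ i : ℕ,
      ((f t)^[i] 0 = 0 ↔ (f 0)^[i] 0 = 0) := by
    intro t ht i
    cases i with
    | zero => simp
    | succ n =>
      have h := hrel t ht 0 (n + 1) (Nat.succ_pos n)
      simpa [eq_comm] using h
  intro t ht i
  refine ⟨?_, hzero t ht i, ?_⟩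
  · -- negative sign constant
    constructor
    · intro hlt
      rcases lt_trichotomy ((f 0)^[i] 0) 0 with h | h | h
      · exact h
      · exact absurd ((hzero t ht i).mpr h) hlt.ne
      · exfalso
        obtain ⟨s, hs, hs0⟩ := intermediate_value_uIcc (a := t) (b := (0:ℝ))
          (f := fun u => (f u)^[i] 0) (hg i).continuousOn
          (show (0:ℝ) ∈ Set.uIcc ((f t)^[i] 0) ((f 0)^[i] 0) from
            Set.mem_uIcc.2 (Or.inl ⟨hlt.le, h.le⟩))
        have hsδ : |s| < δ := by
          rcases Set.mem_uIcc.1 hs with ⟨h1, h2⟩ | ⟨h1, h2⟩ <;>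
            exact lt_of_le_of_lt (abs_le.2 ⟨by nlinarith [neg_abs_le t, le_abs_self t], by nlinarith [neg_abs_le t, le_abs_self t]⟩) ht
        have := (hzero s hsδ i).mp hs0
        exact absurd this h.ne'
    · intro hlt
      rcases lt_trichotomy ((f t)^[i] 0) 0 with h | h | h
      · exact h
      · exact absurd ((hzero t ht i).mp h) hlt.ne
      · exfalso
        obtain ⟨s, hs, hs0⟩ := intermediate_value_uIcc (a := t) (b := (0:ℝ))
          (f := fun u => (f u)^[i] 0) (hg i).continuousOn
          (show (0:ℝ) ∈ Set.uIcc ((f t)^[i] 0) ((f 0)^[i] 0) from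
            Set.mem_uIcc.2 (Or.inr ⟨hlt.le, h.le⟩))
        have hsδ : |s| < δ := by
          rcases Set.mem_uIcc.1 hs with ⟨h1, h2⟩ | ⟨h1, h2⟩ <;>
            exact lt_of_le_of_lt (abs_le.2 ⟨by nlinarith [neg_abs_le t, le_abs_self t], by nlinarith [neg_abs_le t, le_abs_self t]⟩) ht
        have := (hzero s hsδ i).mp hs0
        exact absurd this hlt.ne
  · -- positive sign constant
    constructor
    · intro hlt
      rcases lt_trichotomy ((f 0)^[i] 0) 0 with h | h | h
      · exfalso
        obtain ⟨s, hs, hs0⟩ := intermediate_value_uIcc (a := t) (b := (0:ℝ))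
          (f := fun u => (f u)^[i] 0) (hg i).continuousOn
          (show (0:ℝ) ∈ Set.uIcc ((f t)^[i] 0) ((f 0)^[i] 0) from
            Set.mem_uIcc.2 (Or.inr ⟨h.le, hlt.le⟩))
        have hsδ : |s| < δ := by
          rcases Set.mem_uIcc.1 hs with ⟨h1, h2⟩ | ⟨h1, h2⟩ <;>
            exact lt_of_le_of_lt (abs_le.2 ⟨by nlinarith [neg_abs_le t, le_abs_self t], by nlinarith [neg_abs_le t, le_abs_self t]⟩) ht
        have := (hzero s hsδ i).mp hs0
        exact absurd this h.ne
      · exact absurd ((hzero t ht i).mpr h) hlt.ne'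
      · exact h
    · intro hlt
      rcases lt_trichotomy ((f t)^[i] 0) 0 with h | h | h
      · exfalso
        obtain ⟨s, hs, hs0⟩ := intermediate_value_uIcc (a := t) (b := (0:ℝ))
          (f := fun u => (f u)^[i] 0) (hg i).continuousOn
          (show (0:ℝ) ∈ Set.uIcc ((f t)^[i] 0) ((f 0)^[i] 0) from
            Set.mem_uIcc.2 (Or.inl ⟨h.le, hlt.le⟩))
        have hsδ : |s| < δ := by
          rcases Set.mem_uIcc.1 hs with ⟨h1, h2⟩ | ⟨h1, h2⟩ <;>
            exact lt_of_le_of_lt (abs_le.2 ⟨by nlinarith [neg_abs_le t, le_abs_self t], by nlinarith [neg_abs_le t, le_abs_self t]⟩) ht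
        have := (hzero s hsδ i).mp hs0
        rw [this] at hlt
        exact lt_irrefl _ hlt
      · exact absurd ((hzero t ht i).mp h) hlt.ne'
      · exact h
end

section
/- Let f_t, t ∈ (-δ, δ), be a C^1 family of piecewise expanding C^1 unimodal maps such that the set of critical relations R_t is constant in t. Then for each small t there exists an orientation-preserving homeomorphism h_t: I → I with h_t ∘ f_0 = f_t ∘ h_t. -/
open Set Filter Topology

namespace PEU

/-- Bundled hypotheses for a piecewise expanding unimodal map. -/
structure Exp (F : ℝ → ℝ) (lam : ℝ) : Prop where
  cont : Continuous F
  maps : Set.MapsTo F (Set.Icc (-1:ℝ) 1) (Set.Icc (-1:ℝ) 1)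
  fm1 : F (-1) = -1
  f1 : F 1 = -1
  lam1 : 1 < lam
  expL : ∀ x y : ℝ, -1 ≤ x → x ≤ y → y ≤ 0 → lam * (y - x) ≤ F y - F x
  expR : ∀ x y : ℝ, 0 ≤ x → x ≤ y → y ≤ 1 → lam * (y - x) ≤ F x - F y

namespace Exp

variable {F : ℝ → ℝ} {lam : ℝ} (hF : Exp F lam)
include hF

theorem lam0 : (0:ℝ) < lam := lt_trans one_pos hF.lam1

theorem monoL : ∀ x y : ℝ, -1 ≤ x → x ≤ y → y ≤ 0 → F x ≤ F y := by
  intro x y hx hxy hy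
  have := hF.expL x y hx hxy hy
  nlinarith [hF.lam0]

theorem smonoL : ∀ x y : ℝ, -1 ≤ x → x < y → y ≤ 0 → F x < F y := by
  intro x y hx hxy hy
  have := hF.expL x y hx hxy.le hy
  nlinarith [hF.lam0]

theorem antiR : ∀ x y : ℝ, 0 ≤ x → x ≤ y → y ≤ 1 → F y ≤ F x := by
  intro x y hx hxy hy
  have := hF.expR x y hx hxy hy
  nlinarith [hF.lam0]

theorem santiR : ∀ x y : ℝ, 0 ≤ x → x < y → y ≤ 1 → F y < F x := by
  intro x y hx hxy hy
  have := hF.expR x y hx hxy.le hy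
  nlinarith [hF.lam0]

theorem F0pos : 0 < F 0 := by
  have := hF.expL (-1) 0 le_rfl (by norm_num) le_rfl
  rw [hF.fm1] at this
  nlinarith [hF.lam1]

theorem Fmax : ∀ x : ℝ, -1 ≤ x → x ≤ 1 → F x ≤ F 0 := by
  intro x hx hx1
  rcases le_or_gt x 0 with h | h
  · exact hF.monoL x 0 hx h le_rfl
  · exact hF.antiR 0 x le_rfl h.le hx1

theorem mem (x : ℝ) (hx : x ∈ Icc (-1:ℝ) 1) : F x ∈ Icc (-1:ℝ) 1 := hF.maps hx

theorem orbit_mem : ∀ k : ℕ, F^[k] 0 ∈ Icc (-1:ℝ) 1 := by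
  intro k
  induction k with
  | zero => simp
  | succ n ih =>
    rw [Function.iterate_succ_apply']
    exact hF.mem _ ih

theorem gtfix : ∀ p : ℝ, -1 < p → p ≤ 0 → p < F p := by
  intro p hp hp0
  have := hF.expL (-1) p le_rfl hp.le hp0
  rw [hF.fm1] at this
  nlinarith [hF.lam1]

theorem eqm1 : ∀ z : ℝ, -1 ≤ z → z ≤ 1 → F z = -1 → z = -1 ∨ z = 1 := by
  intro z hz hz1 hFz
  rcases le_or_gt z 0 with h | h
  · left
    rcases eq_or_lt_of_le hz with he | hlt
    · exact he.symm
    · exact absurd hFz (by have := hF.gtfix z hlt h; linarith)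
  · right
    have := hF.expR z 1 h.le hz1 le_rfl
    rw [hF.f1, hFz] at this
    nlinarith [hF.lam0]

end Exp

/-- Construct `Exp` from the unimodal hypotheses. -/
theorem mkExp (F : ℝ → ℝ) (hc : Continuous F)
    (hmaps : Set.MapsTo F (Set.Icc (-1:ℝ) 1) (Set.Icc (-1:ℝ) 1))
    (hm1 : F (-1) = -1) (h1 : F 1 = -1)
    (hL : ∃ g : ℝ → ℝ, ContinuousOn g (Set.Icc (-1 : ℝ) 0) ∧
        ∀ x ∈ Set.Icc (-1 : ℝ) 0,
          HasDerivWithinAt F (g x) (Set.Icc (-1 : ℝ) 0) x ∧ 1 < g x)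
    (hR : ∃ g : ℝ → ℝ, ContinuousOn g (Set.Icc (0 : ℝ) 1) ∧
        ∀ x ∈ Set.Icc (0 : ℝ) 1,
          HasDerivWithinAt F (g x) (Set.Icc (0 : ℝ) 1) x ∧ g x < -1) :
    ∃ lam : ℝ, Exp F lam := by
  obtain ⟨gl, hglc, hgl⟩ := hL
  obtain ⟨gr, hgrc, hgr⟩ := hR
  obtain ⟨cL, hcL, hminL⟩ := isCompact_Icc.exists_isMinOn (s := Icc (-1:ℝ) 0)
    (nonempty_Icc.mpr (by norm_num)) hglc
  obtain ⟨cR, hcR, hmaxR⟩ := isCompact_Icc.exists_isMaxOn (s := Icc (0:ℝ) 1)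
    (nonempty_Icc.mpr (by norm_num)) hgrc
  set lam : ℝ := min (gl cL) (-(gr cR)) with hlam
  have hlam1 : 1 < lam := by
    apply lt_min (hgl cL hcL).2
    have := (hgr cR hcR).2; linarith
  refine ⟨lam, hc, hmaps, hm1, h1, hlam1, ?_, ?_⟩
  · intro x y hx hxy hy
    rcases eq_or_lt_of_le hxy with rfl | hlt
    · simp [sub_self]
    · obtain ⟨c, hcmem, hceq⟩ := exists_hasDerivAt_eq_slope F gl hlt
        (hc.continuousOn)
        (by
          intro z hz
          have hz' : z ∈ Icc (-1:ℝ) 0 := ⟨by linarith [hz.1], by linarith [hz.2]⟩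
          exact (hgl z hz').1.hasDerivAt (Icc_mem_nhds (by linarith [hz.1]) (by linarith [hz.2])))
      have hcmem' : c ∈ Icc (-1:ℝ) 0 := ⟨by linarith [hcmem.1], by linarith [hcmem.2]⟩
      have hmin := hminL hcmem'
      have hlam_le : lam ≤ gl c := le_trans (min_le_left _ _) hmin
      have hne : y - x ≠ 0 := sub_ne_zero.mpr hlt.ne'
      have : gl c * (y - x) = F y - F x := by
        rw [hceq]; field_simp
      nlinarith
  · intro x y hx hxy hy
    rcases eq_or_lt_of_le hxy with rfl | hlt
    · simp [sub_self]
    · obtain ⟨c, hcmem, hceq⟩ := exists_hasDerivAt_eq_slope F gr hlt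
        (hc.continuousOn)
        (by
          intro z hz
          have hz' : z ∈ Icc (0:ℝ) 1 := ⟨by linarith [hz.1], by linarith [hz.2]⟩
          exact (hgr z hz').1.hasDerivAt (Icc_mem_nhds (by linarith [hz.1]) (by linarith [hz.2])))
      have hcmem' : c ∈ Icc (0:ℝ) 1 := ⟨by linarith [hcmem.1], by linarith [hcmem.2]⟩
      have hmax := hmaxR hcmem'
      have hlam_le : lam ≤ -(gr c) := le_trans (min_le_right _ _) (by simp at hmax ⊢; linarith)
      have hne : y - x ≠ 0 := sub_ne_zero.mpr hlt.ne'
      have : gr c * (y - x) = F y - F x := by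
        rw [hceq]; field_simp
      nlinarith


section Build

variable {F G : ℝ → ℝ} {lamF lamG : ℝ}

open Classical in
/-- A choice-based inverse of `G` on a set `s`. -/
noncomputable def invOn (G : ℝ → ℝ) (s : Set ℝ) (y : ℝ) : ℝ :=
  if h : ∃ z ∈ s, G z = y then h.choose else 0

theorem invOn_spec {G : ℝ → ℝ} {s : Set ℝ} {y : ℝ} (h : ∃ z ∈ s, G z = y) :
    invOn G s y ∈ s ∧ G (invOn G s y) = y := by
  rw [invOn, dif_pos h]
  exact ⟨h.choose_spec.1, h.choose_spec.2⟩

theorem transfer_m1 (hF : Exp F lamF) (hG : Exp G lamG)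
    (heq : ∀ j k : ℕ, G^[j] 0 = G^[k] 0 ↔ F^[j] 0 = F^[k] 0)
    (hlt : ∀ j k : ℕ, F^[j] 0 < F^[k] 0 → G^[j] 0 < G^[k] 0) :
    ∀ k : ℕ, F^[k] 0 = -1 → G^[k] 0 = -1 := by
  intro k hk
  rcases Nat.eq_zero_or_pos k with rfl | hk1
  · norm_num at hk
  · have h2 : F^[k+1] 0 = -1 := by
      rw [Function.iterate_succ_apply', hk, hF.fm1]
    have he : F^[k] 0 = F^[k+1] 0 := by rw [hk, h2]
    have hge : G^[k] 0 = G^[k+1] 0 := (heq k (k+1)).mpr he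
    have hlt0 : G^[k] 0 < 0 := by
      have : F^[k] 0 < F^[0] 0 := by simpa [hk] using (by norm_num : (-1:ℝ) < 0)
      simpa using hlt k 0 this
    have hfix : G (G^[k] 0) = G^[k] 0 := by
      have := hge
      rw [Function.iterate_succ_apply'] at this
      exact this.symm
    by_contra hne
    have hgt : -1 < G^[k] 0 :=
      lt_of_le_of_ne (hG.orbit_mem k).1 (fun hh => hne hh.symm)
    have := hG.gtfix (G^[k] 0) hgt hlt0.le
    rw [hfix] at this
    exact lt_irrefl _ this

theorem transfer_one (hF : Exp F lamF) (hG : Exp G lamG)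
    (heq : ∀ j k : ℕ, G^[j] 0 = G^[k] 0 ↔ F^[j] 0 = F^[k] 0)
    (hlt : ∀ j k : ℕ, F^[j] 0 < F^[k] 0 → G^[j] 0 < G^[k] 0) :
    ∀ k : ℕ, F^[k] 0 = 1 → G^[k] 0 = 1 := by
  intro k hk
  rcases Nat.eq_zero_or_pos k with rfl | hk1
  · norm_num at hk
  · have h2 : F^[k+1] 0 = -1 := by
      rw [Function.iterate_succ_apply', hk, hF.f1]
    have hm : G^[k+1] 0 = -1 := transfer_m1 hF hG heq hlt (k+1) h2
    have hGm : G (G^[k] 0) = -1 := by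
      have := hm
      rw [Function.iterate_succ_apply'] at this
      exact this
    have hpos : 0 < G^[k] 0 := by
      have : F^[0] 0 < F^[k] 0 := by simpa [hk] using (by norm_num : (0:ℝ) < 1)
      simpa using hlt 0 k this
    rcases hG.eqm1 (G^[k] 0) (hG.orbit_mem k).1 (hG.orbit_mem k).2 hGm with h | h
    · linarith
    · exact h

theorem transfer_le (heq : ∀ j k : ℕ, G^[j] 0 = G^[k] 0 ↔ F^[j] 0 = F^[k] 0)
    (hlt : ∀ j k : ℕ, F^[j] 0 < F^[k] 0 → G^[j] 0 < G^[k] 0) :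
    ∀ j k : ℕ, F^[j] 0 ≤ F^[k] 0 → G^[j] 0 ≤ G^[k] 0 := by
  intro j k h
  rcases eq_or_lt_of_le h with he | hl
  · exact le_of_eq ((heq j k).mpr he)
  · exact (hlt j k hl).le

/-- The initial monotone interpolation of the critical orbit correspondence. -/
noncomputable def h0 (F G : ℝ → ℝ) : ℝ → ℝ := fun x =>
  sSup ({-1} ∪ ({y | ∃ k : ℕ, 1 ≤ k ∧ F^[k] 0 ≤ x ∧ y = G^[k] 0} ∪ {y | y = 1 ∧ 1 ≤ x}))

/-- The invariant preserved by the pullback operator. -/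
def Y (F G h : ℝ → ℝ) : Prop :=
  (∀ x ∈ Icc (-1:ℝ) 1, ∀ y ∈ Icc (-1:ℝ) 1, x ≤ y → h x ≤ h y) ∧
  (∀ x ∈ Icc (-1:ℝ) 1, h x ∈ Icc (-1:ℝ) 1) ∧
  h (-1) = -1 ∧ h 1 = 1 ∧ ∀ k : ℕ, 1 ≤ k → h (F^[k] 0) = G^[k] 0

theorem h0_Y (hF : Exp F lamF) (hG : Exp G lamG)
    (heq : ∀ j k : ℕ, G^[j] 0 = G^[k] 0 ↔ F^[j] 0 = F^[k] 0)
    (hlt : ∀ j k : ℕ, F^[j] 0 < F^[k] 0 → G^[j] 0 < G^[k] 0) :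
    Y F G (h0 F G) := by
  have hbdd : ∀ x : ℝ, ∀ y ∈ ({-1} ∪ ({y | ∃ k : ℕ, 1 ≤ k ∧ F^[k] 0 ≤ x ∧ y = G^[k] 0} ∪ {y | y = 1 ∧ 1 ≤ x})), y ∈ Icc (-1:ℝ) 1 := by
    intro x y hy
    rcases hy with hy | hy | hy
    · rw [mem_singleton_iff] at hy; subst hy; constructor <;> norm_num
    · obtain ⟨k, _, _, rfl⟩ := hy; exact hG.orbit_mem k
    · rw [hy.1]; constructor <;> norm_num
  have hBdd : ∀ x : ℝ, BddAbove ({-1} ∪ ({y | ∃ k : ℕ, 1 ≤ k ∧ F^[k] 0 ≤ x ∧ y = G^[k] 0} ∪ {y | y = 1 ∧ 1 ≤ x})) := by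
    intro x
    exact ⟨1, fun y hy => (hbdd x y hy).2⟩
  have hne : ∀ x : ℝ, (-1:ℝ) ∈ ({-1} ∪ ({y | ∃ k : ℕ, 1 ≤ k ∧ F^[k] 0 ≤ x ∧ y = G^[k] 0} ∪ {y | y = 1 ∧ 1 ≤ x})) := by
    intro x; left; rfl
  have hmono : ∀ x y : ℝ, x ≤ y → h0 F G x ≤ h0 F G y := by
    intro x y hxy
    apply csSup_le_csSup (hBdd y) ⟨-1, hne x⟩
    intro z hz
    rcases hz with hz | hz | hz
    · exact Or.inl hz
    · obtain ⟨k, hk, hkx, rfl⟩ := hz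
      exact Or.inr (Or.inl ⟨k, hk, le_trans hkx hxy, rfl⟩)
    · exact Or.inr (Or.inr ⟨hz.1, le_trans hz.2 hxy⟩)
  have hmem : ∀ x : ℝ, h0 F G x ∈ Icc (-1:ℝ) 1 := by
    intro x
    constructor
    · exact le_csSup (hBdd x) (hne x)
    · exact csSup_le ⟨-1, hne x⟩ (fun y hy => (hbdd x y hy).2)
  have hcrit : ∀ k : ℕ, 1 ≤ k → h0 F G (F^[k] 0) = G^[k] 0 := by
    intro j hj
    apply le_antisymm
    · apply csSup_le ⟨-1, hne _⟩
      intro y hy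
      rcases hy with hy | hy | hy
      · rw [mem_singleton_iff] at hy; subst hy; exact (hG.orbit_mem j).1
      · obtain ⟨k, hk, hkx, rfl⟩ := hy
        exact transfer_le heq hlt k j hkx
      · rw [hy.1]
        have h1 : F^[j] 0 = 1 := le_antisymm (hF.orbit_mem j).2 hy.2
        rw [transfer_one hF hG heq hlt j h1]
    · exact le_csSup (hBdd _) (Or.inr (Or.inl ⟨j, hj, le_rfl, rfl⟩))
  refine ⟨fun x _ y _ hxy => hmono x y hxy, fun x _ => hmem x, ?_, ?_, hcrit⟩
  · apply le_antisymm
    · apply csSup_le ⟨-1, hne _⟩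
      intro y hy
      rcases hy with hy | hy | hy
      · rw [mem_singleton_iff] at hy; exact le_of_eq hy
      · obtain ⟨k, hk, hkx, rfl⟩ := hy
        have : F^[k] 0 = -1 := le_antisymm hkx (hF.orbit_mem k).1
        rw [transfer_m1 hF hG heq hlt k this]
      · exact absurd hy.2 (by norm_num)
    · exact le_csSup (hBdd _) (hne _)
  · apply le_antisymm
    · exact (hmem 1).2
    · exact le_csSup (hBdd _) (Or.inr (Or.inr ⟨rfl, le_rfl⟩))


/-- Left branch inverse. -/
noncomputable def gmF (G : ℝ → ℝ) : ℝ → ℝ := invOn G (Icc (-1:ℝ) 0)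
/-- Right branch inverse. -/
noncomputable def gpF (G : ℝ → ℝ) : ℝ → ℝ := invOn G (Icc (0:ℝ) 1)

theorem gm_ex (hG : Exp G lamG) : ∀ y : ℝ, -1 ≤ y → y ≤ G 0 → ∃ z ∈ Icc (-1:ℝ) 0, G z = y := by
  intro y h1 h2
  have hsub := intermediate_value_Icc (by norm_num : (-1:ℝ) ≤ 0) hG.cont.continuousOn
  rw [hG.fm1] at hsub
  obtain ⟨z, hz, hze⟩ := hsub ⟨h1, h2⟩
  exact ⟨z, hz, hze⟩

theorem gp_ex (hG : Exp G lamG) : ∀ y : ℝ, -1 ≤ y → y ≤ G 0 → ∃ z ∈ Icc (0:ℝ) 1, G z = y := by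
  intro y h1 h2
  have hsub := intermediate_value_Icc' (by norm_num : (0:ℝ) ≤ 1) hG.cont.continuousOn
  rw [hG.f1] at hsub
  obtain ⟨z, hz, hze⟩ := hsub ⟨h1, h2⟩
  exact ⟨z, hz, hze⟩

theorem gm_spec (hG : Exp G lamG) {y : ℝ} (h1 : -1 ≤ y) (h2 : y ≤ G 0) :
    gmF G y ∈ Icc (-1:ℝ) 0 ∧ G (gmF G y) = y := invOn_spec (gm_ex hG y h1 h2)

theorem gp_spec (hG : Exp G lamG) {y : ℝ} (h1 : -1 ≤ y) (h2 : y ≤ G 0) :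
    gpF G y ∈ Icc (0:ℝ) 1 ∧ G (gpF G y) = y := invOn_spec (gp_ex hG y h1 h2)

theorem gm_eq (hG : Exp G lamG) {z y : ℝ} (hz : z ∈ Icc (-1:ℝ) 0) (hzy : G z = y) :
    gmF G y = z := by
  have h1 : -1 ≤ y := by
    rw [← hzy]
    exact (hG.mem z ⟨hz.1, le_trans hz.2 (by norm_num)⟩).1
  have h2 : y ≤ G 0 := by rw [← hzy]; exact hG.monoL z 0 hz.1 hz.2 le_rfl
  obtain ⟨hm, he⟩ := gm_spec hG h1 h2
  rcases lt_trichotomy (gmF G y) z with h | h | h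
  · have := hG.smonoL _ _ hm.1 h hz.2
    rw [he, hzy] at this
    exact absurd this (lt_irrefl y)
  · exact h
  · have := hG.smonoL _ _ hz.1 h hm.2
    rw [he, hzy] at this
    exact absurd this (lt_irrefl y)

theorem gp_eq (hG : Exp G lamG) {z y : ℝ} (hz : z ∈ Icc (0:ℝ) 1) (hzy : G z = y) :
    gpF G y = z := by
  have h1 : -1 ≤ y := by
    rw [← hzy]
    exact (hG.mem z ⟨le_trans (by norm_num) hz.1, hz.2⟩).1
  have h2 : y ≤ G 0 := by rw [← hzy]; exact hG.antiR 0 z le_rfl hz.1 hz.2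
  obtain ⟨hm, he⟩ := gp_spec hG h1 h2
  rcases lt_trichotomy (gpF G y) z with h | h | h
  · have := hG.santiR _ _ hm.1 h hz.2
    rw [he, hzy] at this
    exact absurd this (lt_irrefl y)
  · exact h
  · have := hG.santiR _ _ hz.1 h hm.2
    rw [he, hzy] at this
    exact absurd this (lt_irrefl y)

theorem gm_mono (hG : Exp G lamG) {y y' : ℝ} (h1 : -1 ≤ y) (h2 : y ≤ G 0)
    (h1' : -1 ≤ y') (h2' : y' ≤ G 0) (hyy : y ≤ y') :
    gmF G y ≤ gmF G y' ∧ lamG * (gmF G y' - gmF G y) ≤ y' - y := by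
  obtain ⟨hm, he⟩ := gm_spec hG h1 h2
  obtain ⟨hm', he'⟩ := gm_spec hG h1' h2'
  have hle : gmF G y ≤ gmF G y' := by
    by_contra hc
    push_neg at hc
    have := hG.expL _ _ hm'.1 hc.le hm.2
    rw [he, he'] at this
    nlinarith [hG.lam0]
  refine ⟨hle, ?_⟩
  have := hG.expL _ _ hm.1 hle hm'.2
  rw [he, he'] at this
  linarith

theorem gp_mono (hG : Exp G lamG) {y y' : ℝ} (h1 : -1 ≤ y) (h2 : y ≤ G 0)
    (h1' : -1 ≤ y') (h2' : y' ≤ G 0) (hyy : y ≤ y') :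
    gpF G y' ≤ gpF G y ∧ lamG * (gpF G y - gpF G y') ≤ y' - y := by
  obtain ⟨hm, he⟩ := gp_spec hG h1 h2
  obtain ⟨hm', he'⟩ := gp_spec hG h1' h2'
  have hle : gpF G y' ≤ gpF G y := by
    by_contra hc
    push_neg at hc
    have := hG.expR _ _ hm.1 hc.le hm'.2
    rw [he, he'] at this
    nlinarith [hG.lam0]
  refine ⟨hle, ?_⟩
  have := hG.expR _ _ hm'.1 hle hm.2
  rw [he, he'] at this
  linarith

theorem gm_lip (hG : Exp G lamG) {y y' : ℝ} (h1 : -1 ≤ y) (h2 : y ≤ G 0)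
    (h1' : -1 ≤ y') (h2' : y' ≤ G 0) :
    lamG * |gmF G y' - gmF G y| ≤ |y' - y| := by
  rcases le_total y y' with h | h
  · obtain ⟨ha, hb⟩ := gm_mono hG h1 h2 h1' h2' h
    rw [abs_of_nonneg (by linarith), abs_of_nonneg (by linarith)]
    exact hb
  · obtain ⟨ha, hb⟩ := gm_mono hG h1' h2' h1 h2 h
    rw [abs_of_nonpos (by linarith), abs_of_nonpos (by linarith)]
    linarith

theorem gp_lip (hG : Exp G lamG) {y y' : ℝ} (h1 : -1 ≤ y) (h2 : y ≤ G 0)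
    (h1' : -1 ≤ y') (h2' : y' ≤ G 0) :
    lamG * |gpF G y' - gpF G y| ≤ |y' - y| := by
  rcases le_total y y' with h | h
  · obtain ⟨ha, hb⟩ := gp_mono hG h1 h2 h1' h2' h
    rw [abs_of_nonpos (by linarith), abs_of_nonneg (by linarith)]
    linarith
  · obtain ⟨ha, hb⟩ := gp_mono hG h1' h2' h1 h2 h
    rw [abs_of_nonneg (by linarith), abs_of_nonpos (by linarith)]
    linarith

/-- The iteration of the pullback (graph transform) operator. -/
noncomputable def seqh (F G : ℝ → ℝ) : ℕ → ℝ → ℝ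
  | 0 => h0 F G
  | (n+1) => fun x => if x ≤ 0 then gmF G (seqh F G n (F x)) else gpF G (seqh F G n (F x))

theorem Ydom (hF : Exp F lamF) {h : ℝ → ℝ} (hY : Y F G h) :
    ∀ x ∈ Icc (-1:ℝ) 1, -1 ≤ h (F x) ∧ h (F x) ≤ G 0 := by
  obtain ⟨hmono, hmem, hm1, h1, hcrit⟩ := hY
  have hG0 : h (F 0) = G 0 := by
    have := hcrit 1 le_rfl
    simpa using this
  intro x hx
  have hFx := hF.mem x hx
  refine ⟨(hmem _ hFx).1, ?_⟩
  rw [← hG0]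
  exact hmono _ hFx _ (hF.mem 0 ⟨by norm_num, by norm_num⟩) (hF.Fmax x hx.1 hx.2)

theorem Y_step (hF : Exp F lamF) (hG : Exp G lamG)
    (heq : ∀ j k : ℕ, G^[j] 0 = G^[k] 0 ↔ F^[j] 0 = F^[k] 0)
    (hlt : ∀ j k : ℕ, F^[j] 0 < F^[k] 0 → G^[j] 0 < G^[k] 0)
    (h : ℝ → ℝ) (hY : Y F G h) :
    Y F G (fun x => if x ≤ 0 then gmF G (h (F x)) else gpF G (h (F x))) := by
  have hdom := Ydom hF hY
  obtain ⟨hmono, hmem, hm1, h1, hcrit⟩ := hY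
  refine ⟨?_, ?_, ?_, ?_, ?_⟩
  · -- monotone
    intro x hx y hy hxy
    by_cases hx0 : x ≤ 0 <;> by_cases hy0 : y ≤ 0 <;> simp only [if_pos, if_neg, hx0, hy0, if_true, if_false]
    · exact (gm_mono hG (hdom x hx).1 (hdom x hx).2 (hdom y hy).1 (hdom y hy).2
        (hmono _ (hF.mem x hx) _ (hF.mem y hy) (hF.monoL x y hx.1 hxy hy0))).1
    · calc gmF G (h (F x)) ≤ 0 := (gm_spec hG (hdom x hx).1 (hdom x hx).2).1.2
        _ ≤ gpF G (h (F y)) := (gp_spec hG (hdom y hy).1 (hdom y hy).2).1.1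
    · exact absurd (le_trans hxy hy0) hx0
    · push_neg at hx0
      exact (gp_mono hG (hdom y hy).1 (hdom y hy).2 (hdom x hx).1 (hdom x hx).2
        (hmono _ (hF.mem y hy) _ (hF.mem x hx) (hF.antiR x y hx0.le hxy hy.2))).1
  · -- maps into I
    intro x hx
    by_cases hx0 : x ≤ 0 <;> simp only [if_pos, if_neg, hx0, if_true, if_false]
    · have := (gm_spec hG (hdom x hx).1 (hdom x hx).2).1
      exact ⟨this.1, le_trans this.2 (by norm_num)⟩
    · have := (gp_spec hG (hdom x hx).1 (hdom x hx).2).1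
      exact ⟨le_trans (by norm_num) this.1, this.2⟩
  · -- value at -1
    have : ((-1:ℝ) ≤ 0) := by norm_num
    simp only [if_pos this]
    rw [hF.fm1, hm1]
    exact gm_eq hG ⟨le_rfl, by norm_num⟩ hG.fm1
  · -- value at 1
    have : ¬ ((1:ℝ) ≤ 0) := by norm_num
    simp only [if_neg this]
    rw [hF.f1, hm1]
    exact gp_eq hG ⟨by norm_num, le_rfl⟩ hG.f1
  · -- critical orbit
    intro k hk
    have hnext : h (F (F^[k] 0)) = G^[k+1] 0 := by
      have := hcrit (k+1) (by omega)
      rw [Function.iterate_succ_apply'] at this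
      exact this
    have hGit : G (G^[k] 0) = G^[k+1] 0 := (Function.iterate_succ_apply' G k 0).symm
    by_cases hx0 : F^[k] 0 ≤ 0
    · have hGk0 : G^[k] 0 ≤ 0 := by
        rcases eq_or_lt_of_le hx0 with he | hl
        · have : F^[k] 0 = F^[0] 0 := by simpa using he
          exact le_of_eq ((heq k 0).mpr this)
        · have : F^[k] 0 < F^[0] 0 := by simpa using hl
          have h' := hlt k 0 this
          simp at h'
          exact h'.le
      simp only [if_pos hx0]
      rw [hnext]
      exact gm_eq hG ⟨(hG.orbit_mem k).1, hGk0⟩ hGit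
    · push_neg at hx0
      have hGk0 : 0 ≤ G^[k] 0 := by
        have : F^[0] 0 < F^[k] 0 := by simpa using hx0
        have h' := hlt 0 k this
        simp at h'
        exact h'.le
      simp only [if_neg (not_le.mpr hx0)]
      rw [hnext]
      exact gp_eq hG ⟨hGk0, (hG.orbit_mem k).2⟩ hGit

theorem seq_Y (hF : Exp F lamF) (hG : Exp G lamG)
    (heq : ∀ j k : ℕ, G^[j] 0 = G^[k] 0 ↔ F^[j] 0 = F^[k] 0)
    (hlt : ∀ j k : ℕ, F^[j] 0 < F^[k] 0 → G^[j] 0 < G^[k] 0) :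
    ∀ n : ℕ, Y F G (seqh F G n) := by
  intro n
  induction n with
  | zero => exact h0_Y hF hG heq hlt
  | succ n ih => exact Y_step hF hG heq hlt _ ih

theorem seq_contract (hF : Exp F lamF) (hG : Exp G lamG)
    (heq : ∀ j k : ℕ, G^[j] 0 = G^[k] 0 ↔ F^[j] 0 = F^[k] 0)
    (hlt : ∀ j k : ℕ, F^[j] 0 < F^[k] 0 → G^[j] 0 < G^[k] 0) :
    ∀ n : ℕ, ∀ x ∈ Icc (-1:ℝ) 1,
      |seqh F G (n+1) x - seqh F G n x| ≤ 2 * (1/lamG)^n := by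
  intro n
  induction n with
  | zero =>
    intro x hx
    have h1 := ((seq_Y hF hG heq hlt 1).2.1) x hx
    have h0' := ((seq_Y hF hG heq hlt 0).2.1) x hx
    rw [abs_le]
    constructor <;> simp <;> [linarith [h1.1, h0'.2]; linarith [h1.2, h0'.1]]
  | succ n ih =>
    intro x hx
    have hFx := hF.mem x hx
    have hd1 := Ydom hF (seq_Y hF hG heq hlt (n+1)) x hx
    have hd0 := Ydom hF (seq_Y hF hG heq hlt n) x hx
    have hih := ih (F x) hFx
    have hlam0 := hG.lam0
    have key : |seqh F G (n+2) x - seqh F G (n+1) x| ≤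
        (1/lamG) * |seqh F G (n+1) (F x) - seqh F G n (F x)| := by
      by_cases hx0 : x ≤ 0
      · have : seqh F G (n+2) x = gmF G (seqh F G (n+1) (F x)) := by
          simp [seqh, if_pos hx0]
        have h2 : seqh F G (n+1) x = gmF G (seqh F G n (F x)) := by
          simp [seqh, if_pos hx0]
        rw [this, h2]
        have := gm_lip hG hd0.1 hd0.2 hd1.1 hd1.2
        rw [div_mul_eq_mul_div, le_div_iff₀ hlam0, mul_comm]
        simpa [one_mul] using this
      · have : seqh F G (n+2) x = gpF G (seqh F G (n+1) (F x)) := by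
          simp [seqh, if_neg hx0]
        have h2 : seqh F G (n+1) x = gpF G (seqh F G n (F x)) := by
          simp [seqh, if_neg hx0]
        rw [this, h2]
        have := gp_lip hG hd0.1 hd0.2 hd1.1 hd1.2
        rw [div_mul_eq_mul_div, le_div_iff₀ hlam0, mul_comm]
        simpa [one_mul] using this
    calc |seqh F G (n+2) x - seqh F G (n+1) x|
        ≤ (1/lamG) * |seqh F G (n+1) (F x) - seqh F G n (F x)| := key
      _ ≤ (1/lamG) * (2 * (1/lamG)^n) := by
          apply mul_le_mul_of_nonneg_left hih
          positivity
      _ = 2 * (1/lamG)^(n+1) := by ring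


/-- A monotone semiconjugacy. -/
structure SC (F G h : ℝ → ℝ) : Prop where
  mono : ∀ x ∈ Icc (-1:ℝ) 1, ∀ y ∈ Icc (-1:ℝ) 1, x ≤ y → h x ≤ h y
  mem : ∀ x ∈ Icc (-1:ℝ) 1, h x ∈ Icc (-1:ℝ) 1
  sgn : ∀ x ∈ Icc (-1:ℝ) 1, x ≤ 0 → h x ≤ 0
  sgp : ∀ x ∈ Icc (-1:ℝ) 1, 0 ≤ x → 0 ≤ h x
  hm1 : h (-1) = -1
  hone : h 1 = 1
  hzero : h 0 = 0
  crit : ∀ k : ℕ, 1 ≤ k → h (F^[k] 0) = G^[k] 0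
  conj : ∀ x ∈ Icc (-1:ℝ) 1, h (F x) = G (h x)

theorem buildSC (hF : Exp F lamF) (hG : Exp G lamG)
    (heq : ∀ j k : ℕ, G^[j] 0 = G^[k] 0 ↔ F^[j] 0 = F^[k] 0)
    (hlt : ∀ j k : ℕ, F^[j] 0 < F^[k] 0 → G^[j] 0 < G^[k] 0) :
    ∃ h : ℝ → ℝ, SC F G h := by
  have hY := seq_Y hF hG heq hlt
  have hcau : ∀ x ∈ Icc (-1:ℝ) 1, ∃ l : ℝ, Tendsto (fun n => seqh F G n x) atTop (𝓝 l) := by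
    intro x hx
    apply cauchySeq_tendsto_of_complete
    apply cauchySeq_of_le_geometric (1/lamG) 2 ((div_lt_one hG.lam0).mpr hG.lam1)
    intro n
    rw [Real.dist_eq, abs_sub_comm]
    exact seq_contract hF hG heq hlt n x hx
  choose! L hL using hcau
  have horb : ∀ k : ℕ, F^[k] 0 ∈ Icc (-1:ℝ) 1 := hF.orbit_mem
  have hcrit : ∀ k : ℕ, 1 ≤ k → L (F^[k] 0) = G^[k] 0 := by
    intro k hk
    have hcn : ∀ n, seqh F G n (F^[k] 0) = G^[k] 0 := fun n => (hY n).2.2.2.2 k hk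
    have := (hL _ (horb k)).congr (fun n => hcn n)
    exact (tendsto_nhds_unique tendsto_const_nhds this).symm
  have hm1 : L (-1) = -1 := by
    have hcn : ∀ n, seqh F G n (-1) = -1 := fun n => (hY n).2.2.1
    have := (hL (-1) ⟨le_rfl, by norm_num⟩).congr (fun n => hcn n)
    exact (tendsto_nhds_unique tendsto_const_nhds this).symm
  have hone : L 1 = 1 := by
    have hcn : ∀ n, seqh F G n 1 = 1 := fun n => (hY n).2.2.2.1
    have := (hL 1 ⟨by norm_num, le_rfl⟩).congr (fun n => hcn n)
    exact (tendsto_nhds_unique tendsto_const_nhds this).symm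
  have hmono : ∀ x ∈ Icc (-1:ℝ) 1, ∀ y ∈ Icc (-1:ℝ) 1, x ≤ y → L x ≤ L y := by
    intro x hx y hy hxy
    exact le_of_tendsto_of_tendsto' (hL x hx) (hL y hy) (fun n => (hY n).1 x hx y hy hxy)
  have hmem : ∀ x ∈ Icc (-1:ℝ) 1, L x ∈ Icc (-1:ℝ) 1 := by
    intro x hx
    constructor
    · exact ge_of_tendsto (hL x hx) (Filter.Eventually.of_forall (fun n => ((hY n).2.1 x hx).1))
    · exact le_of_tendsto (hL x hx) (Filter.Eventually.of_forall (fun n => ((hY n).2.1 x hx).2))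
  have hdomL : ∀ x ∈ Icc (-1:ℝ) 1, -1 ≤ L (F x) ∧ L (F x) ≤ G 0 := by
    intro x hx
    constructor
    · exact ge_of_tendsto (hL _ (hF.mem x hx))
        (Filter.Eventually.of_forall (fun n => (Ydom hF (hY n) x hx).1))
    · exact le_of_tendsto (hL _ (hF.mem x hx))
        (Filter.Eventually.of_forall (fun n => (Ydom hF (hY n) x hx).2))
  have hfix : ∀ x ∈ Icc (-1:ℝ) 1,
      L x = if x ≤ 0 then gmF G (L (F x)) else gpF G (L (F x)) := by
    intro x hx
    have t1 : Tendsto (fun n => seqh F G n (F x)) atTop (𝓝 (L (F x))) := hL _ (hF.mem x hx)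
    have t2 : Tendsto (fun n => seqh F G (n+1) x) atTop (𝓝 (L x)) := by
      have := (hL x hx).comp (tendsto_add_atTop_nat 1)
      exact this
    have hz : Tendsto (fun n => dist (seqh F G n (F x)) (L (F x))) atTop (𝓝 0) :=
      tendsto_iff_dist_tendsto_zero.mp t1
    have hb : ∀ n, dist (seqh F G (n+1) x)
        (if x ≤ 0 then gmF G (L (F x)) else gpF G (L (F x))) ≤
        (1/lamG) * dist (seqh F G n (F x)) (L (F x)) := by
      intro n
      have hdn := Ydom hF (hY n) x hx
      by_cases hx0 : x ≤ 0
      · have he : seqh F G (n+1) x = gmF G (seqh F G n (F x)) := by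
          simp [seqh, if_pos hx0]
        rw [if_pos hx0, he, Real.dist_eq, Real.dist_eq]
        have h3 := gm_lip hG (hdomL x hx).1 (hdomL x hx).2 hdn.1 hdn.2
        rw [div_mul_eq_mul_div, le_div_iff₀ hG.lam0]
        calc |gmF G (seqh F G n (F x)) - gmF G (L (F x))| * lamG
            = lamG * |gmF G (seqh F G n (F x)) - gmF G (L (F x))| := by ring
          _ ≤ |seqh F G n (F x) - L (F x)| := h3
          _ = 1 * |seqh F G n (F x) - L (F x)| := by ring
      · have he : seqh F G (n+1) x = gpF G (seqh F G n (F x)) := by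
          simp [seqh, if_neg hx0]
        rw [if_neg hx0, he, Real.dist_eq, Real.dist_eq]
        have h3 := gp_lip hG (hdomL x hx).1 (hdomL x hx).2 hdn.1 hdn.2
        rw [div_mul_eq_mul_div, le_div_iff₀ hG.lam0]
        calc |gpF G (seqh F G n (F x)) - gpF G (L (F x))| * lamG
            = lamG * |gpF G (seqh F G n (F x)) - gpF G (L (F x))| := by ring
          _ ≤ |seqh F G n (F x) - L (F x)| := h3
          _ = 1 * |seqh F G n (F x) - L (F x)| := by ring
    have t3 : Tendsto (fun n => seqh F G (n+1) x) atTop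
        (𝓝 (if x ≤ 0 then gmF G (L (F x)) else gpF G (L (F x)))) := by
      apply tendsto_iff_dist_tendsto_zero.mpr
      apply squeeze_zero (fun n => dist_nonneg) hb
      have := hz.const_mul (1/lamG)
      simpa using this
    exact tendsto_nhds_unique t2 t3
  have hconj : ∀ x ∈ Icc (-1:ℝ) 1, L (F x) = G (L x) := by
    intro x hx
    have := hfix x hx
    by_cases hx0 : x ≤ 0
    · rw [if_pos hx0] at this
      rw [this]
      exact ((gm_spec hG (hdomL x hx).1 (hdomL x hx).2).2).symm
    · rw [if_neg hx0] at this
      rw [this]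
      exact ((gp_spec hG (hdomL x hx).1 (hdomL x hx).2).2).symm
  have hzero : L 0 = 0 := by
    have h0mem : (0:ℝ) ∈ Icc (-1:ℝ) 1 := ⟨by norm_num, by norm_num⟩
    have := hfix 0 h0mem
    rw [if_pos le_rfl] at this
    have hF0 : L (F 0) = G 0 := by
      have := hcrit 1 le_rfl
      simpa using this
    rw [hF0] at this
    rw [this]
    exact gm_eq hG ⟨by norm_num, le_rfl⟩ rfl
  refine ⟨L, hmono, hmem, ?_, ?_, hm1, hone, hzero, hcrit, hconj⟩
  · intro x hx hx0
    have := hfix x hx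
    rw [if_pos hx0] at this
    rw [this]
    exact (gm_spec hG (hdomL x hx).1 (hdomL x hx).2).1.2
  · intro x hx hx0
    rcases eq_or_lt_of_le hx0 with rfl | hpos
    · rw [hzero]
    · have := hfix x hx
      rw [if_neg (not_le.mpr hpos)] at this
      rw [this]
      exact (gp_spec hG (hdomL x hx).1 (hdomL x hx).2).1.1


theorem SC.smono (hF : Exp F lamF) (hG : Exp G lamG)
    (heq : ∀ j k : ℕ, G^[j] 0 = G^[k] 0 ↔ F^[j] 0 = F^[k] 0)
    {h : ℝ → ℝ} (hsc : SC F G h) :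
    StrictMonoOn h (Icc (-1:ℝ) 1) := by
  have himgL : ∀ u v : ℝ, -1 ≤ u → u < v → v ≤ 0 →
      (∀ z ∈ Icc u v, ∀ z' ∈ Icc u v, h z = h z') →
      (∀ z ∈ Icc (F u) (F v), ∀ z' ∈ Icc (F u) (F v), h z = h z') := by
    intro u v hu huv hv hK z hz z' hz'
    have hIuv : Icc u v ⊆ Icc (-1:ℝ) 1 := Icc_subset_Icc hu (by linarith)
    obtain ⟨w, hw, hwe⟩ := intermediate_value_Icc huv.le hF.cont.continuousOn hz
    obtain ⟨w', hw', hwe'⟩ := intermediate_value_Icc huv.le hF.cont.continuousOn hz'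
    rw [← hwe, ← hwe', hsc.conj w (hIuv hw), hsc.conj w' (hIuv hw'), hK w hw w' hw']
  have himgR : ∀ u v : ℝ, 0 ≤ u → u < v → v ≤ 1 →
      (∀ z ∈ Icc u v, ∀ z' ∈ Icc u v, h z = h z') →
      (∀ z ∈ Icc (F v) (F u), ∀ z' ∈ Icc (F v) (F u), h z = h z') := by
    intro u v hu huv hv hK z hz z' hz'
    have hIuv : Icc u v ⊆ Icc (-1:ℝ) 1 := Icc_subset_Icc (by linarith) hv
    obtain ⟨w, hw, hwe⟩ := intermediate_value_Icc' huv.le hF.cont.continuousOn hz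
    obtain ⟨w', hw', hwe'⟩ := intermediate_value_Icc' huv.le hF.cont.continuousOn hz'
    rw [← hwe, ← hwe', hsc.conj w (hIuv hw), hsc.conj w' (hIuv hw'), hK w hw w' hw']
  have hnc : ∀ a b : ℝ, -1 ≤ a → a < b → b ≤ 1 →
      ¬ (∀ z ∈ Icc a b, ∀ z' ∈ Icc a b, h z = h z') := by
    intro a b ha hab hb hK
    -- Step 1 : produce a constancy interval with 0 as an endpoint
    have hP : ∃ u v : ℝ, -1 ≤ u ∧ u < v ∧ v ≤ 1 ∧
        (∀ z ∈ Icc u v, ∀ z' ∈ Icc u v, h z = h z') ∧ (u = 0 ∨ v = 0) := by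
      have grow : ∀ n : ℕ, ∀ u v : ℝ, -1 ≤ u → u < v → v ≤ 1 →
          (∀ z ∈ Icc u v, ∀ z' ∈ Icc u v, h z = h z') → (v ≤ 0 ∨ 0 ≤ u) →
          (∃ u' v' : ℝ, -1 ≤ u' ∧ u' < v' ∧ v' ≤ 1 ∧
            (∀ z ∈ Icc u' v', ∀ z' ∈ Icc u' v', h z = h z') ∧ (u' = 0 ∨ v' = 0)) ∨
          lamF ^ n * (v - u) ≤ 2 := by
        intro n
        induction n with
        | zero =>
          intro u v h1 h2 h3 hKuv hlap
          right
          have : v - u ≤ 2 := by linarith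
          simpa using this
        | succ n ih =>
          intro u v h1 h2 h3 hKuv hlap
          rcases hlap with hlap | hlap
          · have hKim := himgL u v h1 h2 hlap hKuv
            have hgrow := hF.expL u v h1 h2.le hlap
            have hu' : -1 ≤ F u := (hF.mem u ⟨h1, by linarith⟩).1
            have hv' : F v ≤ 1 := (hF.mem v ⟨by linarith, by linarith⟩).2
            have hlt' : F u < F v := hF.smonoL u v h1 h2 hlap
            rcases le_or_gt (F v) 0 with hc | hc
            · rcases ih (F u) (F v) hu' hlt' (by linarith) hKim (Or.inl hc) with hPP | hle
              · exact Or.inl hPP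
              · right
                calc lamF ^ (n+1) * (v - u) = lamF ^ n * (lamF * (v - u)) := by ring
                  _ ≤ lamF ^ n * (F v - F u) :=
                      mul_le_mul_of_nonneg_left hgrow (pow_nonneg hF.lam0.le n)
                  _ ≤ 2 := hle
            · rcases le_or_gt 0 (F u) with hc' | hc'
              · rcases ih (F u) (F v) hu' hlt' hv' hKim (Or.inr hc') with hPP | hle
                · exact Or.inl hPP
                · right
                  calc lamF ^ (n+1) * (v - u) = lamF ^ n * (lamF * (v - u)) := by ring
                    _ ≤ lamF ^ n * (F v - F u) :=
                        mul_le_mul_of_nonneg_left hgrow (pow_nonneg hF.lam0.le n)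
                    _ ≤ 2 := hle
              · left
                refine ⟨F u, 0, hu', hc', by norm_num, ?_, Or.inr rfl⟩
                intro z hz z' hz'
                exact hKim z ⟨hz.1, by linarith [hz.2]⟩ z' ⟨hz'.1, by linarith [hz'.2]⟩
          · have hKim := himgR u v hlap h2 h3 hKuv
            have hgrow := hF.expR u v hlap h2.le h3
            have hu' : -1 ≤ F v := (hF.mem v ⟨by linarith, h3⟩).1
            have hv' : F u ≤ 1 := (hF.mem u ⟨by linarith, by linarith⟩).2
            have hlt' : F v < F u := hF.santiR u v hlap h2 h3
            rcases le_or_gt (F u) 0 with hc | hc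
            · rcases ih (F v) (F u) hu' hlt' (by linarith) hKim (Or.inl hc) with hPP | hle
              · exact Or.inl hPP
              · right
                calc lamF ^ (n+1) * (v - u) = lamF ^ n * (lamF * (v - u)) := by ring
                  _ ≤ lamF ^ n * (F u - F v) :=
                      mul_le_mul_of_nonneg_left hgrow (pow_nonneg hF.lam0.le n)
                  _ ≤ 2 := hle
            · rcases le_or_gt 0 (F v) with hc' | hc'
              · rcases ih (F v) (F u) hu' hlt' hv' hKim (Or.inr hc') with hPP | hle
                · exact Or.inl hPP
                · right
                  calc lamF ^ (n+1) * (v - u) = lamF ^ n * (lamF * (v - u)) := by ring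
                    _ ≤ lamF ^ n * (F u - F v) :=
                        mul_le_mul_of_nonneg_left hgrow (pow_nonneg hF.lam0.le n)
                    _ ≤ 2 := hle
              · left
                refine ⟨F v, 0, hu', hc', by norm_num, ?_, Or.inr rfl⟩
                intro z hz z' hz'
                exact hKim z ⟨hz.1, by linarith [hz.2]⟩ z' ⟨hz'.1, by linarith [hz'.2]⟩
      rcases le_or_gt b 0 with hb0 | hb0
      · obtain ⟨n, hn⟩ := pow_unbounded_of_one_lt (2 / (b - a)) hF.lam1
        rcases grow n a b ha hab hb hK (Or.inl hb0) with hPP | hle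
        · exact hPP
        · have : 2 < lamF ^ n * (b - a) := by
            rw [div_lt_iff₀ (by linarith)] at hn
            linarith
          linarith
      · rcases le_or_gt 0 a with ha0 | ha0
        · obtain ⟨n, hn⟩ := pow_unbounded_of_one_lt (2 / (b - a)) hF.lam1
          rcases grow n a b ha hab hb hK (Or.inr ha0) with hPP | hle
          · exact hPP
          · have : 2 < lamF ^ n * (b - a) := by
              rw [div_lt_iff₀ (by linarith)] at hn
              linarith
            linarith
        · refine ⟨0, b, by norm_num, hb0, hb, ?_, Or.inl rfl⟩
          intro z hz z' hz'
          exact hK z ⟨by linarith [hz.1], hz.2⟩ z' ⟨by linarith [hz'.1], hz'.2⟩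
    obtain ⟨u, v, hu, huv, hv, hKuv, h0uv⟩ := hP
    -- Step 2 : produce a constancy interval anchored at F^[1] 0
    have hA1 : ∃ p q : ℝ, -1 ≤ p ∧ p < q ∧ q ≤ 1 ∧
        (∀ z ∈ Icc p q, ∀ z' ∈ Icc p q, h z = h z') ∧
        (p = F^[1] 0 ∨ q = F^[1] 0) := by
      rcases h0uv with rfl | rfl
      · have hKim := himgR 0 v le_rfl huv hv hKuv
        refine ⟨F v, F 0, (hF.mem v ⟨by linarith, hv⟩).1,
          hF.santiR 0 v le_rfl huv hv, (hF.mem 0 ⟨by norm_num, by norm_num⟩).2, hKim,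
          Or.inr (by simp)⟩
      · have hKim := himgL u 0 hu huv le_rfl hKuv
        refine ⟨F u, F 0, (hF.mem u ⟨hu, by linarith⟩).1,
          hF.smonoL u 0 hu huv le_rfl, (hF.mem 0 ⟨by norm_num, by norm_num⟩).2, hKim,
          Or.inr (by simp)⟩
    obtain ⟨p1, q1, hp1, hpq1, hq1, hK1, hanch1⟩ := hA1
    -- Step 3 : anchored growth
    have hstep : ∀ k : ℕ, ∀ p q : ℝ, 1 ≤ k → -1 ≤ p → p < q → q ≤ 1 →
        (∀ z ∈ Icc p q, ∀ z' ∈ Icc p q, h z = h z') →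
        (p = F^[k] 0 ∨ q = F^[k] 0) →
        ∃ p' q' : ℝ, -1 ≤ p' ∧ p' < q' ∧ q' ≤ 1 ∧
          (∀ z ∈ Icc p' q', ∀ z' ∈ Icc p' q', h z = h z') ∧
          (p' = F^[k+1] 0 ∨ q' = F^[k+1] 0) ∧ lamF * (q - p) ≤ q' - p' := by
      intro k p q hk hp hpq hq hKpq hanch
      have hsl : q ≤ 0 ∨ 0 ≤ p := by
        by_contra hcc
        push_neg at hcc
        obtain ⟨hq0, hp0⟩ := hcc
        have hpI : p ∈ Icc (-1:ℝ) 1 := ⟨hp, by linarith⟩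
        have hqI : q ∈ Icc (-1:ℝ) 1 := ⟨by linarith, hq⟩
        have hpqv : h p = h q := hKpq p ⟨le_rfl, hpq.le⟩ q ⟨hpq.le, le_rfl⟩
        have hple : h p ≤ 0 := hsc.sgn p hpI (by linarith)
        have hqge : 0 ≤ h q := hsc.sgp q hqI (by linarith)
        have hhp0 : h p = 0 := le_antisymm hple (by rw [hpqv]; exact hqge)
        have hG0 : G^[k] 0 = 0 := by
          rcases hanch with hha | hha
          · rw [← hsc.crit k hk, ← hha]
            exact hhp0
          · rw [← hsc.crit k hk, ← hha, ← hpqv]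
            exact hhp0
        have hF0 : F^[k] 0 = 0 := by
          have h2 : G^[k] 0 = G^[0] 0 := by simpa using hG0
          have := (heq k 0).mp h2
          simpa using this
        rcases hanch with hha | hha
        · rw [hF0] at hha
          linarith
        · rw [hF0] at hha
          linarith
      rcases hsl with hsl | hsl
      · have hKim := himgL p q hp hpq hsl hKpq
        refine ⟨F p, F q, (hF.mem p ⟨hp, by linarith⟩).1, hF.smonoL p q hp hpq hsl,
          (hF.mem q ⟨by linarith, by linarith⟩).2, hKim, ?_, hF.expL p q hp hpq.le hsl⟩
        rcases hanch with hha | hha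
        · exact Or.inl (by rw [hha]; exact (Function.iterate_succ_apply' F k 0).symm)
        · exact Or.inr (by rw [hha]; exact (Function.iterate_succ_apply' F k 0).symm)
      · have hKim := himgR p q hsl hpq hq hKpq
        refine ⟨F q, F p, (hF.mem q ⟨by linarith, hq⟩).1, hF.santiR p q hsl hpq hq,
          (hF.mem p ⟨by linarith, by linarith⟩).2, hKim, ?_, hF.expR p q hsl hpq.le hq⟩
        rcases hanch with hha | hha
        · exact Or.inr (by rw [hha]; exact (Function.iterate_succ_apply' F k 0).symm)
        · exact Or.inl (by rw [hha]; exact (Function.iterate_succ_apply' F k 0).symm)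
    -- Step 4 : iterate and contradict boundedness
    have hiter : ∀ n : ℕ, ∃ k : ℕ, ∃ p q : ℝ, 1 ≤ k ∧ -1 ≤ p ∧ p < q ∧ q ≤ 1 ∧
        (∀ z ∈ Icc p q, ∀ z' ∈ Icc p q, h z = h z') ∧
        (p = F^[k] 0 ∨ q = F^[k] 0) ∧ lamF ^ n * (q1 - p1) ≤ q - p := by
      intro n
      induction n with
      | zero => exact ⟨1, p1, q1, le_rfl, hp1, hpq1, hq1, hK1, hanch1, by simp⟩
      | succ n ih =>
        obtain ⟨k, p, q, hk, hp, hpq, hq, hKpq, hanch, hlen⟩ := ih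
        obtain ⟨p', q', hp', hpq', hq', hK', hanch', hlen'⟩ :=
          hstep k p q hk hp hpq hq hKpq hanch
        refine ⟨k+1, p', q', by omega, hp', hpq', hq', hK', hanch', ?_⟩
        calc lamF ^ (n+1) * (q1 - p1) = lamF * (lamF ^ n * (q1 - p1)) := by ring
          _ ≤ lamF * (q - p) := mul_le_mul_of_nonneg_left hlen hF.lam0.le
          _ ≤ q' - p' := hlen'
    obtain ⟨n, hn⟩ := pow_unbounded_of_one_lt (2 / (q1 - p1)) hF.lam1
    obtain ⟨k, p, q, hk, hp, hpq, hq, _, _, hlen⟩ := hiter n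
    have h2 : 2 < lamF ^ n * (q1 - p1) := by
      rw [div_lt_iff₀ (by linarith)] at hn
      linarith
    linarith
  -- conclude strict monotonicity
  intro x hx y hy hxy
  rcases lt_or_ge (h x) (h y) with hlt' | hle'
  · exact hlt'
  · exfalso
    have hxy' : h x = h y :=
      le_antisymm (hsc.mono x hx y hy hxy.le) hle'
    apply hnc x y hx.1 hxy hy.2
    intro z hz z' hz'
    have hzI : z ∈ Icc (-1:ℝ) 1 := ⟨le_trans hx.1 hz.1, le_trans hz.2 hy.2⟩
    have hzI' : z' ∈ Icc (-1:ℝ) 1 := ⟨le_trans hx.1 hz'.1, le_trans hz'.2 hy.2⟩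
    have e1 : h z = h x := le_antisymm
      (by rw [hxy']; exact hsc.mono z hzI y hy hz.2)
      (hsc.mono x hx z hzI hz.1)
    have e2 : h z' = h x := le_antisymm
      (by rw [hxy']; exact hsc.mono z' hzI' y hy hz'.2)
      (hsc.mono x hx z' hzI' hz'.1)
    rw [e1, e2]


theorem SC.nogap (hF : Exp F lamF) (hG : Exp G lamG)
    {h : ℝ → ℝ} (hsc : SC F G h) (hsm : StrictMonoOn h (Icc (-1:ℝ) 1)) :
    ¬ ∃ p q : ℝ, -1 ≤ p ∧ p < q ∧ q ≤ 1 ∧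
      ∀ x ∈ Icc (-1:ℝ) 1, h x ∉ Ioo p q := by
  have hF0I : F 0 ∈ Icc (-1:ℝ) 1 := hF.mem 0 ⟨by norm_num, by norm_num⟩
  have hhF0 : h (F 0) = G 0 := by
    rw [hsc.conj 0 ⟨by norm_num, by norm_num⟩, hsc.hzero]
  have hstep : ∀ p q : ℝ, -1 ≤ p → p < q → q ≤ 1 →
      (∀ x ∈ Icc (-1:ℝ) 1, h x ∉ Ioo p q) →
      ∃ p' q' : ℝ, -1 ≤ p' ∧ p' < q' ∧ q' ≤ 1 ∧
        (∀ x ∈ Icc (-1:ℝ) 1, h x ∉ Ioo p' q') ∧ lamG * (q - p) ≤ q' - p' := by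
    intro p q hp hpq hq hgap
    have h0 : (0:ℝ) ∉ Ioo p q := by
      intro hc
      exact hgap 0 ⟨by norm_num, by norm_num⟩ (by rw [hsc.hzero]; exact hc)
    have hlap : q ≤ 0 ∨ 0 ≤ p := by
      by_contra hcc
      push_neg at hcc
      exact h0 ⟨hcc.2, hcc.1⟩
    rcases hlap with hlap | hlap
    · -- gap in the left lap
      have hpI : p ∈ Icc (-1:ℝ) 1 := ⟨hp, by linarith⟩
      have hqI : q ∈ Icc (-1:ℝ) 1 := ⟨by linarith, hq⟩
      refine ⟨G p, G q, (hG.mem p hpI).1, hG.smonoL p q hp hpq hlap,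
        (hG.mem q hqI).2, ?_, hG.expL p q hp hpq.le hlap⟩
      intro x hx hmem'
      have hGq0 : G q ≤ G 0 := hG.monoL q 0 (by linarith) hlap le_rfl
      have hxF0 : h x < h (F 0) := by
        rw [hhF0]
        exact lt_of_lt_of_le hmem'.2 hGq0
      have hxlt : x < F 0 := by
        by_contra hcx
        push_neg at hcx
        exact absurd (hsm.monotoneOn hF0I hx hcx) (not_le.mpr hxF0)
      have hxmem : x ∈ Icc (F (-1)) (F 0) := by
        rw [hF.fm1]
        exact ⟨hx.1, hxlt.le⟩
      obtain ⟨z, hz, hze⟩ :=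
        intermediate_value_Icc (by norm_num : (-1:ℝ) ≤ 0) hF.cont.continuousOn hxmem
      have hzI : z ∈ Icc (-1:ℝ) 1 := ⟨hz.1, by linarith [hz.2]⟩
      have hxz : h x = G (h z) := by rw [← hze, hsc.conj z hzI]
      have hhz : h z ∈ Icc (-1:ℝ) 0 := ⟨(hsc.mem z hzI).1, hsc.sgn z hzI hz.2⟩
      apply hgap z hzI
      constructor
      · by_contra hcz
        push_neg at hcz
        have := hG.monoL (h z) p hhz.1 hcz (by linarith)
        rw [← hxz] at this
        exact absurd this (not_le.mpr hmem'.1)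
      · by_contra hcz
        push_neg at hcz
        have := hG.monoL q (h z) (by linarith) hcz hhz.2
        rw [← hxz] at this
        exact absurd this (not_le.mpr hmem'.2)
    · -- gap in the right lap
      have hpI : p ∈ Icc (-1:ℝ) 1 := ⟨by linarith, by linarith⟩
      have hqI : q ∈ Icc (-1:ℝ) 1 := ⟨by linarith, hq⟩
      refine ⟨G q, G p, (hG.mem q hqI).1, hG.santiR p q hlap hpq hq,
        (hG.mem p hpI).2, ?_, hG.expR p q hlap hpq.le hq⟩
      intro x hx hmem'
      have hGp0 : G p ≤ G 0 := hG.antiR 0 p le_rfl hlap (by linarith)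
      have hxF0 : h x < h (F 0) := by
        rw [hhF0]
        exact lt_of_lt_of_le hmem'.2 hGp0
      have hxlt : x < F 0 := by
        by_contra hcx
        push_neg at hcx
        exact absurd (hsm.monotoneOn hF0I hx hcx) (not_le.mpr hxF0)
      have hxmem : x ∈ Icc (F 1) (F 0) := by
        rw [hF.f1]
        exact ⟨hx.1, hxlt.le⟩
      obtain ⟨z, hz, hze⟩ :=
        intermediate_value_Icc' (by norm_num : (0:ℝ) ≤ 1) hF.cont.continuousOn hxmem
      have hzI : z ∈ Icc (-1:ℝ) 1 := ⟨by linarith [hz.1], hz.2⟩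
      have hxz : h x = G (h z) := by rw [← hze, hsc.conj z hzI]
      have hhz : h z ∈ Icc (0:ℝ) 1 := ⟨hsc.sgp z hzI hz.1, (hsc.mem z hzI).2⟩
      apply hgap z hzI
      constructor
      · by_contra hcz
        push_neg at hcz
        have := hG.antiR (h z) p hhz.1 hcz (by linarith)
        rw [← hxz] at this
        exact absurd this (not_le.mpr hmem'.2)
      · by_contra hcz
        push_neg at hcz
        have := hG.antiR q (h z) (by linarith) hcz hhz.2
        rw [← hxz] at this
        exact absurd this (not_le.mpr hmem'.1)
  rintro ⟨p, q, hp, hpq, hq, hgap⟩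
  have hiter : ∀ n : ℕ, ∃ p' q' : ℝ, -1 ≤ p' ∧ p' < q' ∧ q' ≤ 1 ∧
      (∀ x ∈ Icc (-1:ℝ) 1, h x ∉ Ioo p' q') ∧ lamG ^ n * (q - p) ≤ q' - p' := by
    intro n
    induction n with
    | zero => exact ⟨p, q, hp, hpq, hq, hgap, by simp⟩
    | succ n ih =>
      obtain ⟨p', q', hp', hpq', hq', hgap', hlen⟩ := ih
      obtain ⟨p'', q'', hp'', hpq'', hq'', hgap'', hlen'⟩ :=
        hstep p' q' hp' hpq' hq' hgap'
      refine ⟨p'', q'', hp'', hpq'', hq'', hgap'', ?_⟩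
      calc lamG ^ (n+1) * (q - p) = lamG * (lamG ^ n * (q - p)) := by ring
        _ ≤ lamG * (q' - p') := mul_le_mul_of_nonneg_left hlen hG.lam0.le
        _ ≤ q'' - p'' := hlen'
  obtain ⟨n, hn⟩ := pow_unbounded_of_one_lt (2 / (q - p)) hG.lam1
  obtain ⟨p', q', hp', hpq', hq', _, hlen⟩ := hiter n
  have h2 : 2 < lamG ^ n * (q - p) := by
    rw [div_lt_iff₀ (by linarith)] at hn
    linarith
  linarith

theorem SC.surj (hF : Exp F lamF) (hG : Exp G lamG)
    {h : ℝ → ℝ} (hsc : SC F G h) (hsm : StrictMonoOn h (Icc (-1:ℝ) 1)) :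
    ∀ v ∈ Icc (-1:ℝ) 1, ∃ x ∈ Icc (-1:ℝ) 1, h x = v := by
  intro v hv
  by_contra hc
  push_neg at hc
  have hvm1 : -1 < v := by
    rcases eq_or_lt_of_le hv.1 with he | hl
    · exact absurd (show h (-1) = v by rw [hsc.hm1]; exact he) (hc (-1) ⟨le_rfl, by norm_num⟩)
    · exact hl
  have hv1 : v < 1 := by
    rcases eq_or_lt_of_le hv.2 with he | hl
    · exact absurd (show h 1 = v by rw [hsc.hone]; exact he.symm) (hc 1 ⟨by norm_num, le_rfl⟩)
    · exact hl
  set S : Set ℝ := {z | z ∈ Icc (-1:ℝ) 1 ∧ h z < v} with hS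
  have hSne : (-1:ℝ) ∈ S := ⟨⟨le_rfl, by norm_num⟩, by rw [hsc.hm1]; exact hvm1⟩
  have hSbdd : BddAbove S := ⟨1, fun z hz => hz.1.2⟩
  set c := sSup S with hcdef
  have hcm : -1 ≤ c := le_csSup hSbdd hSne
  have hcM : c ≤ 1 := csSup_le ⟨-1, hSne⟩ (fun z hz => hz.1.2)
  have hcI : c ∈ Icc (-1:ℝ) 1 := ⟨hcm, hcM⟩
  have hcv : h c ≠ v := hc c hcI
  rcases lt_or_gt_of_ne hcv with hlt' | hgt'
  · apply hsc.nogap hF hG hsm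
    refine ⟨h c, v, (hsc.mem c hcI).1, hlt', hv.2, ?_⟩
    intro x hx hmem'
    have hxS : x ∈ S := ⟨hx, hmem'.2⟩
    have hxc : x ≤ c := le_csSup hSbdd hxS
    have := hsm.monotoneOn hx hcI hxc
    exact absurd this (not_le.mpr hmem'.1)
  · apply hsc.nogap hF hG hsm
    refine ⟨v, h c, hv.1, hgt', (hsc.mem c hcI).2, ?_⟩
    intro x hx hmem'
    have hxc : c ≤ x := by
      by_contra hcx
      push_neg at hcx
      obtain ⟨z, hzS, hxz⟩ := exists_lt_of_lt_csSup ⟨-1, hSne⟩ hcx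
      have := hsm.monotoneOn hx hzS.1 hxz.le
      have : h x < v := lt_of_le_of_lt this hzS.2
      exact absurd this (not_lt.mpr hmem'.1.le)
    have := hsm.monotoneOn hcI hx hxc
    exact absurd this (not_le.mpr hmem'.2)


theorem SC.cont (hF : Exp F lamF) (hG : Exp G lamG)
    {h : ℝ → ℝ} (hsc : SC F G h) (hsm : StrictMonoOn h (Icc (-1:ℝ) 1)) :
    ContinuousOn h (Icc (-1:ℝ) 1) := by
  have hsurj := hsc.surj hF hG hsm
  set e : Icc (-1:ℝ) 1 → Icc (-1:ℝ) 1 := fun x => ⟨h x, hsc.mem x x.2⟩ with he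
  have hesm : StrictMono e := by
    intro x y hxy
    have : h x < h y := hsm x.2 y.2 hxy
    exact Subtype.mk_lt_mk.mpr this
  have hesurj : Function.Surjective e := by
    intro v
    obtain ⟨x, hx, hxv⟩ := hsurj v v.2
    exact ⟨⟨x, hx⟩, Subtype.ext hxv⟩
  let iso := StrictMono.orderIsoOfSurjective e hesm hesurj
  have hco : Continuous e := by
    have : Continuous iso := OrderIso.continuous iso
    exact this
  rw [continuousOn_iff_continuous_restrict]
  exact continuous_subtype_val.comp hco

end Build

end PEU


/-- Theorem 1, A ⟹ B: Let `f t`, `|t| < δ`, be a C¹ family of piecewise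
expanding C¹ unimodal maps (each `f t` maps `I = [-1,1]` to itself, fixes the
boundary conditions, and is C¹ with derivative `> 1` on `[-1,0]` and `< -1` on
`[0,1]`; the family is continuous jointly and differentiable in `t`).  If the set of
critical relations `R_t = {(i,j) : f_t^i(c) = f_t^j(c), i < j}` is constant in `t`,
then each `f t` is conjugate to `f 0` by an orientation-preserving homeomorphism
`h : I → I`. -/
theorem conjugacy_of_constant_critical_relations
    (f : ℝ → ℝ → ℝ) (δ : ℝ) (hδ : 0 < δ)
    (hcont : Continuous fun p : ℝ × ℝ => f p.1 p.2)
    (hC1t : ∀ x ∈ Set.Icc (-1 : ℝ) 1, ∀ t : ℝ, |t| < δ →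
      ∃ w : ℝ, HasDerivAt (fun s => f s x) w t)
    (hunim : ∀ t : ℝ, |t| < δ →
      Set.MapsTo (f t) (Set.Icc (-1 : ℝ) 1) (Set.Icc (-1 : ℝ) 1) ∧
      f t (-1) = -1 ∧ f t 1 = -1 ∧ f t 0 ≤ 1 ∧
      (∃ g : ℝ → ℝ, ContinuousOn g (Set.Icc (-1 : ℝ) 0) ∧
        ∀ x ∈ Set.Icc (-1 : ℝ) 0,
          HasDerivWithinAt (f t) (g x) (Set.Icc (-1 : ℝ) 0) x ∧ 1 < g x) ∧
      (∃ g : ℝ → ℝ, ContinuousOn g (Set.Icc (0 : ℝ) 1) ∧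
        ∀ x ∈ Set.Icc (0 : ℝ) 1,
          HasDerivWithinAt (f t) (g x) (Set.Icc (0 : ℝ) 1) x ∧ g x < -1))
    (hrel : ∀ t : ℝ, |t| < δ → ∀ i j : ℕ, i < j →
      ((f t)^[i] 0 = (f t)^[j] 0 ↔ (f 0)^[i] 0 = (f 0)^[j] 0)) :
    ∀ t : ℝ, |t| < δ → ∃ h : ℝ → ℝ,
      ContinuousOn h (Set.Icc (-1 : ℝ) 1) ∧
      StrictMonoOn h (Set.Icc (-1 : ℝ) 1) ∧
      h (-1) = -1 ∧ h 1 = 1 ∧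
      h '' Set.Icc (-1 : ℝ) 1 = Set.Icc (-1 : ℝ) 1 ∧
      ∀ x ∈ Set.Icc (-1 : ℝ) 1, h (f 0 x) = f t (h x) := by
  intro t ht
  have h0δ : |(0:ℝ)| < δ := by simpa using hδ
  obtain ⟨hFmaps, hFm1, hF1, hF0le, hFL, hFR⟩ := hunim 0 h0δ
  obtain ⟨hGmaps, hGm1, hG1, hG0le, hGL, hGR⟩ := hunim t ht
  have hFc : Continuous (f 0) := hcont.comp (Continuous.prodMk_right 0)
  have hGc : Continuous (f t) := hcont.comp (Continuous.prodMk_right t)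
  obtain ⟨lamF, hF⟩ := PEU.mkExp (f 0) hFc hFmaps hFm1 hF1 hFL hFR
  obtain ⟨lamG, hG⟩ := PEU.mkExp (f t) hGc hGmaps hGm1 hG1 hGL hGR
  have hitc : ∀ i : ℕ, Continuous fun s : ℝ => (f s)^[i] 0 := by
    intro i
    induction i with
    | zero => simpa using continuous_const
    | succ n ih =>
      have hcompeq : (fun s : ℝ => (f s)^[n+1] 0) = fun s : ℝ => f s ((f s)^[n] 0) := by
        funext s
        rw [Function.iterate_succ_apply']
      rw [hcompeq]
      exact hcont.comp (continuous_id.prodMk ih)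
  have heqs : ∀ s : ℝ, |s| < δ → ∀ j k : ℕ,
      ((f s)^[j] 0 = (f s)^[k] 0 ↔ (f 0)^[j] 0 = (f 0)^[k] 0) := by
    intro s hs j k
    rcases lt_trichotomy j k with hjk | rfl | hjk
    · exact hrel s hs j k hjk
    · simp
    · constructor
      · intro e
        exact ((hrel s hs k j hjk).mp e.symm).symm
      · intro e
        exact ((hrel s hs k j hjk).mpr e.symm).symm
  have heq := heqs t ht
  have hlt : ∀ j k : ℕ, (f 0)^[j] 0 < (f 0)^[k] 0 → (f t)^[j] 0 < (f t)^[k] 0 := by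
    intro j k hjk
    by_contra hcb
    push_neg at hcb
    have hψc : Continuous fun s : ℝ => (f s)^[j] 0 - (f s)^[k] 0 := (hitc j).sub (hitc k)
    have h0v : (fun s : ℝ => (f s)^[j] 0 - (f s)^[k] 0) 0 < 0 := sub_neg.mpr hjk
    have htv : 0 ≤ (fun s : ℝ => (f s)^[j] 0 - (f s)^[k] 0) t := sub_nonneg.mpr hcb
    have hmem0 : (0:ℝ) ∈ Set.uIcc ((fun s : ℝ => (f s)^[j] 0 - (f s)^[k] 0) 0)
        ((fun s : ℝ => (f s)^[j] 0 - (f s)^[k] 0) t) := by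
      rw [Set.mem_uIcc]
      left
      exact ⟨h0v.le, htv⟩
    obtain ⟨s, hsmem, hse⟩ := intermediate_value_uIcc hψc.continuousOn hmem0
    have hsδ : |s| < δ := by
      rw [abs_lt] at ht ⊢
      rcases le_total 0 t with h' | h'
      · rw [Set.uIcc_of_le h'] at hsmem
        exact ⟨by linarith [hsmem.1], by linarith [hsmem.2]⟩
      · rw [Set.uIcc_of_ge h'] at hsmem
        exact ⟨by linarith [hsmem.1], by linarith [hsmem.2]⟩
    have hse' : (f s)^[j] 0 - (f s)^[k] 0 = 0 := hse
    exact absurd ((heqs s hsδ j k).mp (sub_eq_zero.mp hse')) hjk.ne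
  obtain ⟨h, hsc⟩ := PEU.buildSC hF hG heq hlt
  have hsm := hsc.smono hF hG heq
  have hcont' := hsc.cont hF hG hsm
  have hsurj := hsc.surj hF hG hsm
  refine ⟨h, hcont', hsm, hsc.hm1, hsc.hone, ?_, fun x hx => hsc.conj x hx⟩
  apply Set.Subset.antisymm
  · rintro y ⟨x, hx, rfl⟩
    exact hsc.mem x hx
  · intro v hv
    obtain ⟨x, hx, hxv⟩ := hsurj v hv
    exact ⟨x, hx, hxv⟩
end

section
/- Let f be a piecewise expanding unimodal map with λ_f = min|Df| > 1, let ε > 0 and suppose there exists N₀ such that for every interval Q ⊆ [-ε,ε], |f^{N₀}(Q)| > λ_f|Q|. If Q ⊆ I is an interval with |f^i(Q)| < ε for every i ∈ ℕ, then |Q| = 0. -/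
/-- Iterates are continuous on `[-1,1]` and map it into itself. -/
private lemma iter_contOn_mapsTo (f : ℝ → ℝ)
    (hcont : ContinuousOn f (Set.Icc (-1 : ℝ) 1))
    (hmap : Set.MapsTo f (Set.Icc (-1 : ℝ) 1) (Set.Icc (-1 : ℝ) 1)) :
    ∀ n : ℕ, ContinuousOn (f^[n]) (Set.Icc (-1 : ℝ) 1) ∧
      Set.MapsTo (f^[n]) (Set.Icc (-1 : ℝ) 1) (Set.Icc (-1 : ℝ) 1) := by
  intro n
  induction n with
  | zero => exact ⟨continuousOn_id, Set.mapsTo_id _⟩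
  | succ n ih =>
    constructor
    · rw [Function.iterate_succ']
      exact hcont.comp ih.1 ih.2
    · rw [Function.iterate_succ']
      exact hmap.comp ih.2

private lemma image_Icc_eq (g : ℝ → ℝ) (u v : ℝ) (huv : u ≤ v)
    (hg : ContinuousOn g (Set.Icc u v)) :
    ∃ u' v', u' ≤ v' ∧ g '' Set.Icc u v = Set.Icc u' v' ∧
      Metric.diam (g '' Set.Icc u v) = v' - u' := by
  have himg := hg.image_Icc huv
  have hcpt : IsCompact (g '' Set.Icc u v) := (isCompact_Icc).image_of_continuousOn hg
  have hle : sInf (g '' Set.Icc u v) ≤ sSup (g '' Set.Icc u v) :=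
    Real.sInf_le_sSup _ hcpt.bddBelow hcpt.bddAbove
  exact ⟨_, _, hle, himg, by rw [himg, Real.diam_Icc hle, csSup_Icc hle, csInf_Icc hle]⟩

/-- core of Proposition 2.1: Let `f` be a piecewise expanding unimodal
map on `I = [-1,1]` (so that any interval avoiding the critical point `0` is expanded
by a factor `lam > 1`), let `ε > 0`, and suppose `N₀` is such that every nondegenerate
interval `Q ⊆ [-ε,ε]` satisfies `|f^{N₀}(Q)| > lam·|Q|`.  If `Q = [a,b] ⊆ I` is an
interval with `|f^i(Q)| < ε` for all `i`, then `|Q| = 0`, i.e. `a = b`.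
Lengths of images are expressed as metric diameters of images of the compact
interval (these images are intervals, by continuity). -/
theorem small_iterates_implies_degenerate
    (f : ℝ → ℝ) (lam ε : ℝ) (N₀ : ℕ)
    (hlam : 1 < lam) (hε : 0 < ε) (hε1 : ε ≤ 1)
    (hcont : ContinuousOn f (Set.Icc (-1 : ℝ) 1))
    (hmap : Set.MapsTo f (Set.Icc (-1 : ℝ) 1) (Set.Icc (-1 : ℝ) 1))
    (hexp : ∀ a b : ℝ, -1 ≤ a → a ≤ b → b ≤ 1 → (0 : ℝ) ∉ Set.Ioo a b →
      lam * (b - a) ≤ Metric.diam (f '' Set.Icc a b))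
    (hN : ∀ a b : ℝ, -ε ≤ a → a < b → b ≤ ε →
      lam * (b - a) < Metric.diam (f^[N₀] '' Set.Icc a b)) :
    ∀ a b : ℝ, -1 ≤ a → a ≤ b → b ≤ 1 →
      (∀ i : ℕ, Metric.diam (f^[i] '' Set.Icc a b) < ε) → a = b := by
  intro a b ha hab hb hsmall
  by_contra hne
  have hab' : a < b := lt_of_le_of_ne hab hne
  have hQsub : Set.Icc a b ⊆ Set.Icc (-1 : ℝ) 1 := Set.Icc_subset_Icc ha hb
  -- all iterated images sit inside [-1,1]
  have himg_sub : ∀ m : ℕ, f^[m] '' Set.Icc a b ⊆ Set.Icc (-1 : ℝ) 1 := by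
    intro m
    exact ((iter_contOn_mapsTo f hcont hmap m).2.mono_left hQsub).image_subset
  -- key induction
  have key : ∀ s : ℕ, ∃ m u v, u ≤ v ∧ Set.Icc u v ⊆ f^[m] '' Set.Icc a b ∧
      lam ^ s * (b - a) ≤ v - u := by
    intro s
    induction s with
    | zero => exact ⟨0, a, b, hab, by simp, by simp⟩
    | succ s ih =>
      obtain ⟨m, u, v, huv, hsub, hlen⟩ := ih
      have huv1 : Set.Icc u v ⊆ Set.Icc (-1 : ℝ) 1 := hsub.trans (himg_sub m)
      have hu1 : -1 ≤ u := (huv1 (Set.left_mem_Icc.2 huv)).1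
      have hv1 : v ≤ 1 := (huv1 (Set.right_mem_Icc.2 huv)).2
      -- length control: v - u ≤ diam (f^[m]'' Q) < ε
      have hvu_lt : v - u < ε := by
        have hmono : Metric.diam (Set.Icc u v) ≤ Metric.diam (f^[m] '' Set.Icc a b) :=
          Metric.diam_mono hsub ((Metric.isBounded_Icc (-1 : ℝ) 1).subset (himg_sub m))
        rw [Real.diam_Icc huv] at hmono
        exact lt_of_le_of_lt hmono (hsmall m)
      by_cases h0 : (0 : ℝ) ∈ Set.Ioo u v
      · -- small interval around 0: use hN
        have hu' : -ε ≤ u := by nlinarith [h0.1, h0.2]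
        have hv' : v ≤ ε := by nlinarith [h0.1, h0.2]
        have huv' : u < v := lt_trans h0.1 h0.2
        have hdiam := hN u v hu' huv' hv'
        have hgcont : ContinuousOn (f^[N₀]) (Set.Icc u v) :=
          (iter_contOn_mapsTo f hcont hmap N₀).1.mono huv1
        obtain ⟨u', v', hle', heq', hdiam'⟩ := image_Icc_eq (f^[N₀]) u v huv hgcont
        refine ⟨N₀ + m, u', v', hle', ?_, ?_⟩
        · rw [← heq']
          intro x hx
          rw [Function.iterate_add f N₀ m, Set.image_comp]
          exact Set.image_mono hsub hx
        · rw [← hdiam']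
          calc lam ^ (s + 1) * (b - a) = lam * (lam ^ s * (b - a)) := by ring
            _ ≤ lam * (v - u) := by
                have := mul_le_mul_of_nonneg_left hlen (le_of_lt (lt_trans one_pos hlam))
                linarith
            _ ≤ Metric.diam (f^[N₀] '' Set.Icc u v) := le_of_lt (heq' ▸ hdiam)
      · -- interval avoiding 0: use hexp
        have hdiam := hexp u v hu1 huv hv1 h0
        have hgcont : ContinuousOn f (Set.Icc u v) := hcont.mono huv1
        obtain ⟨u', v', hle', heq', hdiam'⟩ := image_Icc_eq f u v huv hgcont
        refine ⟨m + 1, u', v', hle', ?_, ?_⟩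
        · rw [← heq']
          intro x hx
          rw [Function.iterate_succ' f m, Set.image_comp]
          exact Set.image_mono hsub hx
        · rw [← hdiam']
          calc lam ^ (s + 1) * (b - a) = lam * (lam ^ s * (b - a)) := by ring
            _ ≤ lam * (v - u) := by
                have := mul_le_mul_of_nonneg_left hlen (le_of_lt (lt_trans one_pos hlam))
                linarith
            _ ≤ Metric.diam (f '' Set.Icc u v) := hdiam
  -- choose s large
  have hba : 0 < b - a := sub_pos.2 hab'
  obtain ⟨s, hs⟩ := pow_unbounded_of_one_lt (ε / (b - a)) hlam
  obtain ⟨m, u, v, huv, hsub, hlen⟩ := key s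
  have huv1 : Set.Icc u v ⊆ Set.Icc (-1 : ℝ) 1 := hsub.trans (himg_sub m)
  have hvu_lt : v - u < ε := by
    have hmono : Metric.diam (Set.Icc u v) ≤ Metric.diam (f^[m] '' Set.Icc a b) :=
      Metric.diam_mono hsub ((Metric.isBounded_Icc (-1 : ℝ) 1).subset (himg_sub m))
    rw [Real.diam_Icc huv] at hmono
    exact lt_of_le_of_lt hmono (hsmall m)
  have : ε < lam ^ s * (b - a) := by
    rw [div_lt_iff₀ hba] at hs
    linarith
  linarith
end
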